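/- arXiv:1110.1243 — 4 statements merged into one kernel-verified Lean document; each statement's English description precedes it below -/
import Mathlib

section
/- Let X be a Banach space and C > 0 such that ca_{ρ*}(x*_n) ≤ C·δ(x*_n) for every bounded sequence (x*_n) in X*. Then wca_{ρ*}(x*_n) ≤ 2C·wk_{X*}({x*_n : n ∈ ℕ}) for every bounded sequence (x*_n) in X*. -/
open Metric NormedSpace Filter Topology Set

noncomputable section

/-- A subset of a Banach space is weakly compact if it is compact in the weak topology. -/
def IsWeaklyCompact {Z : Type*} [NormedAddCommGroup Z] [NormedSpace ℝ Z] (K : Set Z) : Prop :=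
  IsCompact (toWeakSpace ℝ Z '' K)

/-- `ca (x_k) = inf_n sup_{i,j ≥ n} ‖x_i - x_j‖`. -/
def ca {Z : Type*} [NormedAddCommGroup Z] (x : ℕ → Z) : ℝ :=
  ⨅ n : ℕ, sSup {r : ℝ | ∃ i j : ℕ, n ≤ i ∧ n ≤ j ∧ r = ‖x i - x j‖}

/-- `wca` is the infimum of `ca` over all subsequences. -/
def wca {Z : Type*} [NormedAddCommGroup Z] (x : ℕ → Z) : ℝ :=
  ⨅ φ : {φ : ℕ → ℕ // StrictMono φ}, ca (x ∘ φ)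

/-- A sequence is weakly Cauchy if `(x*(x_k))` converges for every functional `x*`. -/
def WeaklyCauchy {Z : Type*} [NormedAddCommGroup Z] [NormedSpace ℝ Z] (x : ℕ → Z) : Prop :=
  ∀ f : StrongDual ℝ Z, ∃ l : ℝ, Tendsto (fun n => f (x n)) atTop (nhds l)

/-- A sequence is weakly null if `x*(x_k) → 0` for every functional `x*`. -/
def WeaklyNull {Z : Type*} [NormedAddCommGroup Z] [NormedSpace ℝ Z] (x : ℕ → Z) : Prop :=
  ∀ f : StrongDual ℝ Z, Tendsto (fun n => f (x n)) atTop (nhds 0)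

/-- `cc T`: measure of non-complete-continuity of an operator. -/
def cc {X Y : Type*} [NormedAddCommGroup X] [NormedSpace ℝ X]
    [NormedAddCommGroup Y] [NormedSpace ℝ Y] (T : X →L[ℝ] Y) : ℝ :=
  sSup {r : ℝ | ∃ x : ℕ → X, (∀ n, ‖x n‖ ≤ 1) ∧ WeaklyCauchy x ∧
    r = ca (fun n => T (x n))}

/-- Non-symmetrized Hausdorff distance `d̂(A,B) = sup_{a ∈ A} dist(a, B)`. -/
def dhat {Z : Type*} [NormedAddCommGroup Z] (A B : Set Z) : ℝ :=
  ⨆ a : A, infDist (a : Z) B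

/-- de Blasi measure of weak non-compactness. -/
def deBlasiOmega {Z : Type*} [NormedAddCommGroup Z] [NormedSpace ℝ Z] (A : Set Z) : ℝ :=
  ⨅ K : {K : Set Z // K.Nonempty ∧ IsWeaklyCompact K}, dhat A K

/-- Hausdorff measure of non-compactness. -/
def hausdorffChi {Z : Type*} [NormedAddCommGroup Z] (A : Set Z) : ℝ :=
  ⨅ F : {F : Set Z // F.Finite ∧ F.Nonempty}, dhat A F

/-- weak* closure of a set of functionals. -/
def wstarClosure {E : Type*} [NormedAddCommGroup E] [NormedSpace ℝ E]
    (A : Set (StrongDual ℝ E)) : Set (StrongDual ℝ E) :=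
  StrongDual.toWeakDual ⁻¹' closure (StrongDual.toWeakDual '' A)

/-- `wk_Z(A) = d̂(cl_{w*}(ι(A)), ι(Z))` in the bidual. -/
def wkMeasure {Z : Type*} [NormedAddCommGroup Z] [NormedSpace ℝ Z] (A : Set Z) : ℝ :=
  dhat (wstarClosure ((inclusionInDoubleDual ℝ Z) '' A))
    (Set.range (inclusionInDoubleDual ℝ Z))

/-- `z` is a weak* cluster point of the sequence `u` of functionals. -/
def IsWeakStarClusterPt {E : Type*} [NormedAddCommGroup E] [NormedSpace ℝ E]
    (z : StrongDual ℝ E) (u : ℕ → StrongDual ℝ E) : Prop :=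
  MapClusterPt (StrongDual.toWeakDual z) atTop (fun n => StrongDual.toWeakDual (u n))

/-- `wck(A)`. -/
def wck {Z : Type*} [NormedAddCommGroup Z] [NormedSpace ℝ Z] (A : Set Z) : ℝ :=
  sSup {r : ℝ | ∃ x : ℕ → Z, (∀ n, x n ∈ A) ∧
    r = sInf {s : ℝ | ∃ (z : StrongDual ℝ (StrongDual ℝ Z)) (x₀ : Z),
      IsWeakStarClusterPt z (fun n => inclusionInDoubleDual ℝ Z (x n)) ∧
      s = ‖z - inclusionInDoubleDual ℝ Z x₀‖}}

/-- `ca_ρ` of a sequence. -/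
def caRho {Z : Type*} [NormedAddCommGroup Z] [NormedSpace ℝ Z] (x : ℕ → Z) : ℝ :=
  ⨆ K : {K : Set (StrongDual ℝ Z) // K ⊆ closedBall 0 1 ∧ IsWeaklyCompact K},
    ⨅ n : ℕ, sSup {r : ℝ | ∃ i j : ℕ, n ≤ i ∧ n ≤ j ∧
      ∃ f ∈ K.1, r = |f (x i) - f (x j)|}

/-- `wca_ρ` of a sequence. -/
def wcaRho {Z : Type*} [NormedAddCommGroup Z] [NormedSpace ℝ Z] (x : ℕ → Z) : ℝ :=
  ⨅ φ : {φ : ℕ → ℕ // StrictMono φ}, caRho (x ∘ φ)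

/-- `ca_{ρ*}` of a sequence in a dual space. -/
def caRhoStar {Z : Type*} [NormedAddCommGroup Z] [NormedSpace ℝ Z]
    (x : ℕ → StrongDual ℝ Z) : ℝ :=
  ⨆ K : {K : Set Z // K ⊆ closedBall 0 1 ∧ IsWeaklyCompact K},
    ⨅ n : ℕ, sSup {r : ℝ | ∃ i j : ℕ, n ≤ i ∧ n ≤ j ∧
      ∃ v ∈ K.1, r = |x i v - x j v|}

/-- `wca_{ρ*}` of a sequence in a dual space. -/
def wcaRhoStar {Z : Type*} [NormedAddCommGroup Z] [NormedSpace ℝ Z]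
    (x : ℕ → StrongDual ℝ Z) : ℝ :=
  ⨅ φ : {φ : ℕ → ℕ // StrictMono φ}, caRhoStar (x ∘ φ)

/-- `δ(x_k)`. -/
def deltaSeq {Z : Type*} [NormedAddCommGroup Z] [NormedSpace ℝ Z] (x : ℕ → Z) : ℝ :=
  ⨆ f : (closedBall (0 : StrongDual ℝ Z) 1),
    ⨅ n : ℕ, sSup {r : ℝ | ∃ i j : ℕ, n ≤ i ∧ n ≤ j ∧
      r = |(f : StrongDual ℝ Z) (x i) - (f : StrongDual ℝ Z) (x j)|}

/-- The adjoint of a bounded operator between Banach spaces. -/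
def adjointOp {X Y : Type*} [NormedAddCommGroup X] [NormedSpace ℝ X]
    [NormedAddCommGroup Y] [NormedSpace ℝ Y] (T : X →L[ℝ] Y) :
    StrongDual ℝ Y →L[ℝ] StrongDual ℝ X :=
  (ContinuousLinearMap.compL ℝ X Y ℝ).flip T

namespace S8Comb

variable {Λ : Type*} (G : Set Λ) (hitA hitB : Λ → ℕ → Prop)

/-- points of `N` where `F` has an `A`-hit. -/
def ASet (F : Λ) (N : Set ℕ) : Set ℕ := {k | k ∈ N ∧ hitA F k}

def BSet (F : Λ) (N : Set ℕ) : Set ℕ := {k | k ∈ N ∧ hitB F k}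

def Osc (F : Λ) (N : Set ℕ) : Prop :=
  (ASet hitA F N).Infinite ∧ (BSet hitB F N).Infinite

def Realize (F : Λ) (P Q : Finset ℕ) : Prop :=
  (∀ i ∈ P, hitA F i) ∧ (∀ i ∈ Q, hitB F i)

def Pers (P Q : Finset ℕ) (M : Set ℕ) : Prop :=
  ∀ N : Set ℕ, N ⊆ M → N.Infinite →
    ∃ F ∈ G, Realize hitA hitB F P Q ∧ Osc hitA hitB F N

variable {G hitA hitB}

lemma aset_mono {F : Λ} {N N' : Set ℕ} (h : N ⊆ N') :
    ASet hitA F N ⊆ ASet hitA F N' := fun k hk => ⟨h hk.1, hk.2⟩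

lemma bset_mono {F : Λ} {N N' : Set ℕ} (h : N ⊆ N') :
    BSet hitB F N ⊆ BSet hitB F N' := fun k hk => ⟨h hk.1, hk.2⟩

lemma osc_mono {F : Λ} {N N' : Set ℕ} (h : N ⊆ N') (ho : Osc hitA hitB F N) :
    Osc hitA hitB F N' :=
  ⟨ho.1.mono (aset_mono h), ho.2.mono (bset_mono h)⟩

lemma osc_diff {F : Λ} {N T : Set ℕ} (hT : T.Finite) (ho : Osc hitA hitB F N) :
    Osc hitA hitB F (N \ T) := by
  constructor
  · have : ASet hitA F N \ T ⊆ ASet hitA F (N \ T) := by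
      intro k hk; exact ⟨⟨hk.1.1, hk.2⟩, hk.1.2⟩
    exact ((ho.1.diff hT).mono this)
  · have : BSet hitB F N \ T ⊆ BSet hitB F (N \ T) := by
      intro k hk; exact ⟨⟨hk.1.1, hk.2⟩, hk.1.2⟩
    exact ((ho.2.diff hT).mono this)

lemma pers_mono {P Q : Finset ℕ} {N M : Set ℕ} (h : N ⊆ M)
    (hp : Pers G hitA hitB P Q M) : Pers G hitA hitB P Q N :=
  fun N' h1 h2 => hp N' (h1.trans h) h2

lemma not_pers {P Q : Finset ℕ} {N : Set ℕ} (h : ¬ Pers G hitA hitB P Q N) :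
    ∃ N', N' ⊆ N ∧ N'.Infinite ∧
      ∀ F ∈ G, Realize hitA hitB F P Q → ¬ Osc hitA hitB F N' := by
  rcases Classical.em (∃ N', N' ⊆ N ∧ N'.Infinite ∧
      ∀ F ∈ G, Realize hitA hitB F P Q → ¬ Osc hitA hitB F N') with h' | h'
  · exact h'
  · exfalso
    apply h
    intro N' h1 h2
    by_contra hno
    exact h' ⟨N', h1, h2, fun F hF hre ho => hno ⟨F, hF, hre, ho⟩⟩

/-- `Clean π s k N`: no `G`-functional that realizes `π` and oscillates on `N`
has an `s`-hit at `k`. -/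
def Clean (π : Finset ℕ × Finset ℕ) (s : Bool) (k : ℕ) (N : Set ℕ) : Prop :=
  ∀ F ∈ G, Realize hitA hitB F π.1 π.2 → Osc hitA hitB F N →
    ¬ (cond s (hitA F k) (hitB F k))

lemma chainAux (k : ℕ) (pats : List (Finset ℕ × Finset ℕ)) :
    ∀ N : Set ℕ, N.Infinite →
    (∃ N', N' ⊆ N ∧ N'.Infinite ∧ ∃ π ∈ pats, ∃ s : Bool,
        Clean (G := G) (hitA := hitA) (hitB := hitB) π s k N') ∨
    (∃ N₂, N₂ ⊆ N ∧ N₂.Infinite ∧ ∀ π ∈ pats,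
        Pers G hitA hitB (insert k π.1) π.2 N₂ ∧ Pers G hitA hitB π.1 (insert k π.2) N₂) := by
  induction pats with
  | nil => exact fun N hN => Or.inr ⟨N, Subset.rfl, hN, by simp⟩
  | cons π t ih =>
    intro N hN
    by_cases hA : ∃ N₁, N₁ ⊆ N ∧ N₁.Infinite ∧ Pers G hitA hitB (insert k π.1) π.2 N₁
    · obtain ⟨N₁, hN₁N, hN₁, hPA⟩ := hA
      by_cases hB : ∃ N₂, N₂ ⊆ N₁ ∧ N₂.Infinite ∧ Pers G hitA hitB π.1 (insert k π.2) N₂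
      · obtain ⟨N₂, hsub2, hinf2, hPB⟩ := hB
        rcases ih N₂ hinf2 with ⟨N', h1, h2, π', hmem, s, hcl⟩ | ⟨N₃, h1, h2, hall⟩
        · exact Or.inl ⟨N', h1.trans (hsub2.trans hN₁N), h2, π',
            List.mem_cons_of_mem _ hmem, s, hcl⟩
        · refine Or.inr ⟨N₃, h1.trans (hsub2.trans hN₁N), h2, ?_⟩
          intro π'' hm
          rcases List.mem_cons.1 hm with rfl | hm'
          · exact ⟨pers_mono (h1.trans hsub2) hPA, pers_mono h1 hPB⟩
          · exact hall _ hm'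
      · have hnp : ¬ Pers G hitA hitB π.1 (insert k π.2) N₁ :=
          fun hp => hB ⟨N₁, Subset.rfl, hN₁, hp⟩
        obtain ⟨N', hsub, hinf, hcl⟩ := not_pers hnp
        refine Or.inl ⟨N', hsub.trans hN₁N, hinf, π, List.mem_cons_self, false, ?_⟩
        intro F hF hreal hosc hhit
        simp only [cond_false] at hhit
        refine hcl F hF ⟨hreal.1, ?_⟩ hosc
        intro i hi
        rcases Finset.mem_insert.1 hi with rfl | hi'
        · exact hhit
        · exact hreal.2 i hi'
    · have hnp : ¬ Pers G hitA hitB (insert k π.1) π.2 N :=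
        fun hp => hA ⟨N, Subset.rfl, hN, hp⟩
      obtain ⟨N', hsub, hinf, hcl⟩ := not_pers hnp
      refine Or.inl ⟨N', hsub, hinf, π, List.mem_cons_self, true, ?_⟩
      intro F hF hreal hosc hhit
      simp only [cond_true] at hhit
      refine hcl F hF ⟨?_, hreal.2⟩ hosc
      intro i hi
      rcases Finset.mem_insert.1 hi with rfl | hi'
      · exact hhit
      · exact hreal.1 i hi'


lemma C1 (M N₀ : Set ℕ) (hN₀M : N₀ ⊆ M) (hN₀ : N₀.Infinite)
    (pats : List (Finset ℕ × Finset ℕ))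
    (hpats : ∀ π ∈ pats, Pers G hitA hitB π.1 π.2 M) :
    ∃ k ∈ N₀, ∃ M', M' ⊆ M ∧ M'.Infinite ∧ ∀ π ∈ pats,
      Pers G hitA hitB (insert k π.1) π.2 M' ∧ Pers G hitA hitB π.1 (insert k π.2) M' := by
  classical
  by_contra H
  set κ : ℕ → ℕ := fun j => Nat.nth (· ∈ N₀) j with hκdef
  have hN₀' : (setOf (· ∈ N₀)).Infinite := by exact hN₀
  have hκmem : ∀ j, κ j ∈ N₀ := fun j => Nat.nth_mem_of_infinite hN₀' j
  have step : ∀ S : Set ℕ, S ⊆ N₀ → S.Infinite → ∀ j : ℕ,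
      ∃ S', S' ⊆ S ∧ S'.Infinite ∧ ∃ π ∈ pats, ∃ s : Bool,
        Clean (G := G) (hitA := hitA) (hitB := hitB) π s (κ j) S' := by
    intro S hSN hSinf j
    rcases chainAux (G := G) (hitA := hitA) (hitB := hitB) (κ j) pats S hSinf with
      ⟨N', h1, h2, h3⟩ | ⟨N₂, h1, h2, hall⟩
    · exact ⟨N', h1, h2, h3⟩
    · exact absurd ⟨κ j, hκmem j, N₂, (h1.trans hSN).trans hN₀M, h2, hall⟩ H
  let T := {S : Set ℕ // S ⊆ N₀ ∧ S.Infinite}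
  let nxt : T → ℕ → T := fun S j =>
    ⟨(step S.1 S.2.1 S.2.2 j).choose,
     (step S.1 S.2.1 S.2.2 j).choose_spec.1.trans S.2.1,
     (step S.1 S.2.1 S.2.2 j).choose_spec.2.1⟩
  let Gc : ℕ → T := fun j => Nat.rec ⟨N₀, Subset.rfl, hN₀⟩ (fun j ih => nxt ih j) j
  have hGdec : ∀ j, (Gc (j+1)).1 ⊆ (Gc j).1 := fun j =>
    (step (Gc j).1 (Gc j).2.1 (Gc j).2.2 j).choose_spec.1
  have hGmono : ∀ {i j}, j ≤ i → (Gc i).1 ⊆ (Gc j).1 := by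
    intro i j hji
    induction hji with
    | refl => exact Set.Subset.rfl
    | step h ih => exact (hGdec _).trans ih
  have hGclean : ∀ j, ∃ π ∈ pats, ∃ s : Bool,
      Clean (G := G) (hitA := hitA) (hitB := hitB) π s (κ j) (Gc (j+1)).1 := fun j =>
    (step (Gc j).1 (Gc j).2.1 (Gc j).2.2 j).choose_spec.2.2
  have hlab : ∀ j, ∃ v : {π // π ∈ pats} × Bool,
      Clean (G := G) (hitA := hitA) (hitB := hitB) v.1.1 v.2 (κ j) (Gc (j+1)).1 := by
    intro j
    obtain ⟨π, hπ, s, hc⟩ := hGclean j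
    exact ⟨⟨⟨π, hπ⟩, s⟩, hc⟩
  let lab : ℕ → {π // π ∈ pats} × Bool := fun j => (hlab j).choose
  have hlabspec : ∀ j, Clean (G := G) (hitA := hitA) (hitB := hitB)
      (lab j).1.1 (lab j).2 (κ j) (Gc (j+1)).1 := fun j => (hlab j).choose_spec
  have hesel : ∀ (c j : ℕ), ∃ m, m ∈ (Gc (j+1)).1 ∧ c < m := by
    intro c j
    obtain ⟨m, hm, hcm⟩ := (Gc (j+1)).2.2.exists_gt c
    exact ⟨m, hm, hcm⟩
  let e : ℕ → ℕ := fun j => Nat.rec (hesel 0 0).choose (fun j ih => (hesel ih (j+1)).choose) j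
  have hemem : ∀ j, e j ∈ (Gc (j+1)).1 := by
    intro j
    cases j with
    | zero => exact (hesel 0 0).choose_spec.1
    | succ i => exact (hesel (e i) (i+1)).choose_spec.1
  have hemono : StrictMono e :=
    strictMono_nat_of_lt_succ (fun j => (hesel (e j) (j+1)).choose_spec.2)
  have heN₀ : ∀ j, e j ∈ N₀ := fun j => (Gc (j+1)).2.1 (hemem j)
  let ρ : ℕ → ℕ := fun j => Nat.count (· ∈ N₀) (e j)
  have hκρ : ∀ j, κ (ρ j) = e j := fun j => Nat.nth_count (heN₀ j)
  let labOf : ℕ → {π // π ∈ pats} × Bool := fun j => lab (ρ j)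
  have hfinsub : Finite {π // π ∈ pats} := (List.finite_toSet pats).to_subtype
  obtain ⟨v, hv⟩ := Finite.exists_infinite_fiber labOf
  have hJ : (labOf ⁻¹' {v}).Infinite := Set.infinite_coe_iff.1 hv
  set NSS : Set ℕ := e '' (labOf ⁻¹' {v}) with hNSSdef
  have hNSSinf : NSS.Infinite := hJ.image (hemono.injective.injOn)
  have hNSSM : NSS ⊆ M := by
    rintro _ ⟨j, _, rfl⟩
    exact hN₀M (heN₀ j)
  obtain ⟨F, hFG, hFre, hFosc⟩ := hpats v.1.1 v.1.2 NSS hNSSM hNSSinf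
  have hnohit : ∀ j ∈ labOf ⁻¹' {v}, ¬ (cond v.2 (hitA F (e j)) (hitB F (e j))) := by
    intro j hj
    have hcl := hlabspec (ρ j)
    rw [hκρ j] at hcl
    have hvj : lab (ρ j) = v := hj
    rw [hvj] at hcl
    have htail : NSS \ (e '' (Set.Iio (ρ j))) ⊆ (Gc (ρ j + 1)).1 := by
      rintro m hm
      obtain ⟨⟨i, _, rfl⟩, hnot⟩ := hm
      have hiρ : ρ j ≤ i := by
        by_contra hlt
        push_neg at hlt
        exact hnot ⟨i, hlt, rfl⟩
      exact hGmono (Nat.succ_le_succ hiρ) (hemem i)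
    have hosc' : Osc hitA hitB F (Gc (ρ j + 1)).1 :=
      osc_mono htail (osc_diff ((Set.finite_Iio _).image e) hFosc)
    exact hcl F hFG hFre hosc'
  rcases Bool.eq_false_or_eq_true v.2 with hb | hb
  · obtain ⟨k, hk⟩ := hFosc.1.nonempty
    obtain ⟨j, hj, rfl⟩ := hk.1
    refine hnohit j hj ?_
    rw [hb]
    simp only [cond_true]
    exact hk.2
  · obtain ⟨k, hk⟩ := hFosc.2.nonempty
    obtain ⟨j, hj, rfl⟩ := hk.1
    refine hnohit j hj ?_
    rw [hb]
    simp only [cond_false]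
    exact hk.2


lemma C2 (M0 : Set ℕ) (hM0 : M0.Infinite) (hpers : Pers G hitA hitB ∅ ∅ M0) :
    ∃ L : ℕ → ℕ, StrictMono L ∧ ∀ n m : ℕ, n ≤ m → ∃ F ∈ G,
      (∀ i, i < n → hitA F (L i)) ∧ (∀ i, n ≤ i → i < m → hitB F (L i)) := by
  classical
  have step : ∀ K : Finset ℕ, ∀ S : Set ℕ, S ⊆ M0 → S.Infinite →
      (∀ s ∈ S, ∀ u ∈ K, u < s) →
      (∀ t : ℕ, Pers G hitA hitB (K.filter (· < t)) (K.filter (fun u => t ≤ u)) S) →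
      ∃ k ∈ S, ∃ S', S' ⊆ S ∧ S'.Infinite ∧ (∀ s ∈ S', k < s) ∧
        ∀ t : ℕ, Pers G hitA hitB ((insert k K).filter (· < t))
          ((insert k K).filter (fun u => t ≤ u)) S' := by
    intro K S hSM hSinf hgt hcut
    set B := (K.sup id) + 1 with hBdef
    have hKltB : ∀ u ∈ K, u < B := fun u hu => Nat.lt_succ_of_le (Finset.le_sup (f := id) hu)
    set pats : List (Finset ℕ × Finset ℕ) :=
      (List.range (B+1)).map (fun t => (K.filter (· < t), K.filter (fun u => t ≤ u))) with hpatsdef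
    have hpats : ∀ π ∈ pats, Pers G hitA hitB π.1 π.2 S := by
      intro π hπ
      simp only [hpatsdef, List.mem_map, List.mem_range] at hπ
      obtain ⟨t, _, rfl⟩ := hπ
      exact hcut t
    obtain ⟨k, hkS, M', hM'S, hM'inf, hext⟩ :=
      C1 (G := G) (hitA := hitA) (hitB := hitB) S S Subset.rfl hSinf pats hpats
    have hKk : ∀ u ∈ K, u < k := fun u hu => hgt k hkS u hu
    have hcutmem : ∀ t : ℕ, t ≤ B →
        (K.filter (· < t), K.filter (fun u => t ≤ u)) ∈ pats := by
      intro t ht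
      simp only [hpatsdef, List.mem_map, List.mem_range]
      exact ⟨t, Nat.lt_succ_of_le ht, rfl⟩
    refine ⟨k, hkS, M' \ Set.Iic k, Set.diff_subset.trans hM'S,
      hM'inf.diff (Set.finite_Iic k), fun s hs => not_le.1 hs.2, ?_⟩
    intro t
    rcases le_or_gt t k with htk | hkt
    · -- t ≤ k : extension on the B side of the cut pattern `min t B`
      have h1 : (insert k K).filter (· < t) = K.filter (· < t) := by
        rw [Finset.filter_insert, if_neg (by omega)]
      have h2 : (insert k K).filter (fun u => t ≤ u) = insert k (K.filter (fun u => t ≤ u)) := by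
        rw [Finset.filter_insert, if_pos htk]
      have h3 : K.filter (· < t) = K.filter (· < min t B) := by
        rcases le_or_gt t B with h | h
        · rw [min_eq_left h]
        · apply Finset.filter_congr
          intro u hu
          have := hKltB u hu
          omega
      have h4 : K.filter (fun u => t ≤ u) = K.filter (fun u => min t B ≤ u) := by
        rcases le_or_gt t B with h | h
        · rw [min_eq_left h]
        · apply Finset.filter_congr
          intro u hu
          have := hKltB u hu
          omega
      have hp := (hext _ (hcutmem (min t B) (min_le_right _ _))).2
      rw [h1, h2, h3, h4]
      exact pers_mono Set.diff_subset hp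
    · -- k < t : the all-A pattern
      have h1 : (insert k K).filter (· < t) = insert k K := by
        rw [Finset.filter_insert, if_pos hkt, Finset.filter_true_of_mem
          (fun u hu => (hKk u hu).trans hkt)]
      have h2 : (insert k K).filter (fun u => t ≤ u) = ∅ := by
        rw [Finset.filter_insert, if_neg (by omega), Finset.filter_false_of_mem]
        intro u hu
        have := hKk u hu
        omega
      have h3 : K.filter (· < B) = K := Finset.filter_true_of_mem hKltB
      have h4 : K.filter (fun u => B ≤ u) = ∅ := by
        apply Finset.filter_false_of_mem
        intro u hu
        have := hKltB u hu
        omega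
      have hp := (hext _ (hcutmem B le_rfl)).1
      rw [h3, h4] at hp
      rw [h1, h2]
      exact pers_mono Set.diff_subset hp
  -- the iterative construction
  let T2 := {st : ℕ × Finset ℕ × Set ℕ //
    st.2.2 ⊆ M0 ∧ st.2.2.Infinite ∧ (∀ s ∈ st.2.2, ∀ u ∈ st.2.1, u < s) ∧
    ∀ t : ℕ, Pers G hitA hitB (st.2.1.filter (· < t)) (st.2.1.filter (fun u => t ≤ u)) st.2.2}
  have hnext : ∀ st : T2, ∃ st' : T2,
      st'.1.2.1 = insert st'.1.1 st.1.2.1 ∧ st'.1.1 ∈ st.1.2.2 ∧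
      st'.1.2.2 ⊆ st.1.2.2 ∧ (∀ u ∈ st.1.2.1, u < st'.1.1) := by
    rintro ⟨⟨k0, K, S⟩, hSM, hSinf, hgt, hcut⟩
    obtain ⟨k, hkS, S', h1, h2, h3, h4⟩ := step K S hSM hSinf hgt hcut
    refine ⟨⟨⟨k, insert k K, S'⟩, (h1.trans hSM), h2, ?_, h4⟩, rfl, hkS, h1,
      fun u hu => hgt k hkS u hu⟩
    intro s hs u hu
    rcases Finset.mem_insert.1 hu with rfl | hu'
    · exact h3 s hs
    · exact (hgt k hkS u hu').trans (h3 s hs)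
  choose nxt hn1 hn2 hn3 hn4 using hnext
  have hbase : (∅ : Finset ℕ) = ∅ := rfl
  let st0 : T2 := ⟨(0, ∅, M0), Set.Subset.rfl, hM0, by simp, by
    intro t
    simpa [Finset.filter_empty] using hpers⟩
  let ch : ℕ → T2 := fun j => Nat.rec st0 (fun _ ih => nxt ih) j
  have hchsucc : ∀ j, ch (j+1) = nxt (ch j) := fun j => rfl
  let L : ℕ → ℕ := fun j => (ch (j+1)).1.1
  have hKsucc : ∀ j, (ch (j+1)).1.2.1 = insert (L j) ((ch j).1.2.1) := fun j => hn1 (ch j)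
  have hLK : ∀ i j, i < j → L i ∈ (ch j).1.2.1 := by
    intro i j hij
    induction j with
    | zero => omega
    | succ j ih =>
      rw [hKsucc j]
      rcases Nat.lt_succ_iff_lt_or_eq.1 hij with h | h
      · exact Finset.mem_insert_of_mem (ih h)
      · rw [h]
        exact Finset.mem_insert_self _ _
  have hLmono : StrictMono L := by
    apply strictMono_nat_of_lt_succ
    intro j
    have h := hn4 (ch (j+1))
    exact h (L j) (hLK j (j+1) (Nat.lt_succ_self j))
  refine ⟨L, hLmono, ?_⟩
  intro n m hnm
  have hcut := (ch m).2.2.2.2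
  rcases eq_or_lt_of_le hnm with rfl | hlt
  · -- n = m : all-A pattern
    set t := ((ch n).1.2.1.sup id) + 1 with htdef
    obtain ⟨F, hFG, hre, -⟩ := hcut t (ch n).1.2.2 Set.Subset.rfl (ch n).2.2.1
    refine ⟨F, hFG, ?_, ?_⟩
    · intro i hi
      refine hre.1 (L i) (Finset.mem_filter.2 ⟨hLK i n hi, ?_⟩)
      have : L i ≤ (ch n).1.2.1.sup id := Finset.le_sup (f := id) (hLK i n hi)
      omega
    · intro i h1 h2
      omega
  · -- n < m : cut at L n
    obtain ⟨F, hFG, hre, -⟩ := hcut (L n) (ch m).1.2.2 Set.Subset.rfl (ch m).2.2.1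
    refine ⟨F, hFG, ?_, ?_⟩
    · intro i hi
      exact hre.1 (L i) (Finset.mem_filter.2 ⟨hLK i m (hi.trans hlt), hLmono hi⟩)
    · intro i h1 h2
      exact hre.2 (L i) (Finset.mem_filter.2 ⟨hLK i m h2, hLmono.monotone h1⟩)

end S8Comb

namespace S8A

variable {Z : Type*} [NormedAddCommGroup Z] [NormedSpace ℝ Z]

lemma cluster_ge {v : ℕ → ℝ} {c r : ℝ} (hcl : MapClusterPt c atTop v) {n₀ : ℕ}
    (hv : ∀ k, n₀ ≤ k → r ≤ v k) : r ≤ c := by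
  by_contra hlt
  push_neg at hlt
  have hfreq : ∃ᶠ k in atTop, v k ∈ Set.Iio r :=
    (mapClusterPt_iff_frequently.1 hcl) _ (Iio_mem_nhds hlt)
  obtain ⟨k, hk1, hk2⟩ := Filter.frequently_atTop.1 hfreq n₀
  exact absurd (hv k hk1) (not_le.2 hk2)

lemma cluster_le {v : ℕ → ℝ} {c r : ℝ} (hcl : MapClusterPt c atTop v) {n₀ : ℕ}
    (hv : ∀ k, n₀ ≤ k → v k ≤ r) : c ≤ r := by
  by_contra hlt
  push_neg at hlt
  have hfreq : ∃ᶠ k in atTop, v k ∈ Set.Ioi r :=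
    (mapClusterPt_iff_frequently.1 hcl) _ (Ioi_mem_nhds hlt)
  obtain ⟨k, hk1, hk2⟩ := Filter.frequently_atTop.1 hfreq n₀
  exact absurd (hv k hk1) (not_le.2 hk2)

lemma ballW_compact {E : Type*} [NormedAddCommGroup E] [NormedSpace ℝ E] (r : ℝ) :
    IsCompact (WeakDual.toStrongDual ⁻¹' closedBall (0 : StrongDual ℝ E) r) :=
  WeakDual.isCompact_closedBall (0 : StrongDual ℝ E) r

lemma mem_ballW_iff {E : Type*} [NormedAddCommGroup E] [NormedSpace ℝ E] {r : ℝ}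
    {w : WeakDual ℝ E} :
    w ∈ WeakDual.toStrongDual ⁻¹' closedBall (0 : StrongDual ℝ E) r ↔
      ‖WeakDual.toStrongDual w‖ ≤ r := by
  rw [Set.mem_preimage, mem_closedBall_zero_iff]

lemma toWeakDual_mem_ballW {E : Type*} [NormedAddCommGroup E] [NormedSpace ℝ E] {r : ℝ}
    {F : StrongDual ℝ E} (hF : ‖F‖ ≤ r) :
    StrongDual.toWeakDual F ∈ WeakDual.toStrongDual ⁻¹' closedBall (0 : StrongDual ℝ E) r := by
  rw [mem_ballW_iff]
  exact hF

lemma norm_le_of_mem_wstarClosure {x : ℕ → Z} {M₀ : ℝ}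
    (hx : ∀ n, ‖x n‖ ≤ M₀) {u : StrongDual ℝ (StrongDual ℝ Z)}
    (hu : u ∈ wstarClosure ((inclusionInDoubleDual ℝ Z) '' (Set.range x))) : ‖u‖ ≤ M₀ := by
  have h1 : StrongDual.toWeakDual u ∈
      closure (StrongDual.toWeakDual '' ((inclusionInDoubleDual ℝ Z) '' (Set.range x))) := hu
  have hcl : IsClosed (WeakDual.toStrongDual ⁻¹' closedBall (0 : StrongDual ℝ (StrongDual ℝ Z)) M₀) :=
    (ballW_compact M₀).isClosed
  have hsub : StrongDual.toWeakDual '' ((inclusionInDoubleDual ℝ Z) '' (Set.range x)) ⊆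
      WeakDual.toStrongDual ⁻¹' closedBall (0 : StrongDual ℝ (StrongDual ℝ Z)) M₀ := by
    rintro _ ⟨_, ⟨_, ⟨n, rfl⟩, rfl⟩, rfl⟩
    refine toWeakDual_mem_ballW ?_
    exact (NormedSpace.double_dual_bound ℝ Z _).trans (hx n)
  have := closure_minimal hsub hcl h1
  rwa [mem_ballW_iff] at this

lemma le_wkMeasure {x : ℕ → Z} {M₀ : ℝ}
    (hx : ∀ n, ‖x n‖ ≤ M₀) {u : StrongDual ℝ (StrongDual ℝ Z)}
    (hu : u ∈ wstarClosure ((inclusionInDoubleDual ℝ Z) '' (Set.range x))) :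
    infDist u (Set.range (inclusionInDoubleDual ℝ Z)) ≤ wkMeasure (Set.range x) := by
  have hbdd : BddAbove (Set.range fun a : ↥(wstarClosure
      ((inclusionInDoubleDual ℝ Z) '' (Set.range x))) =>
      infDist (a : StrongDual ℝ (StrongDual ℝ Z)) (Set.range (inclusionInDoubleDual ℝ Z))) := by
    refine ⟨M₀, ?_⟩
    rintro _ ⟨a, rfl⟩
    calc infDist (a : StrongDual ℝ (StrongDual ℝ Z)) (Set.range (inclusionInDoubleDual ℝ Z))
        ≤ dist (a : StrongDual ℝ (StrongDual ℝ Z)) (inclusionInDoubleDual ℝ Z 0) :=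
          infDist_le_dist_of_mem ⟨0, rfl⟩
      _ = ‖(a : StrongDual ℝ (StrongDual ℝ Z))‖ := by rw [map_zero, dist_zero_right]
      _ ≤ M₀ := norm_le_of_mem_wstarClosure hx a.2
  exact le_ciSup hbdd ⟨u, hu⟩

set_option maxHeartbeats 1000000 in
lemma clusterBound (x : ℕ → Z) {M₀ : ℝ} (hx : ∀ n, ‖x n‖ ≤ M₀)
    (L : ℕ → ℕ) (a b : ℝ)
    (hreal : ∀ n m : ℕ, n ≤ m → ∃ F : StrongDual ℝ Z, ‖F‖ ≤ 1 ∧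
      (∀ i, i < n → F (x (L i)) ≤ a) ∧ (∀ i, n ≤ i → i < m → b ≤ F (x (L i)))) :
    (b - a) / 2 ≤ wkMeasure (Set.range x) := by
  classical
  -- Step 1: functionals with an infinite B-tail, via compactness (FIP)
  have hFn : ∀ n : ℕ, ∃ F : StrongDual ℝ Z, ‖F‖ ≤ 1 ∧ (∀ i, i < n → F (x (L i)) ≤ a) ∧
      (∀ i, n ≤ i → b ≤ F (x (L i))) := by
    intro n
    set C : ℕ → Set (WeakDual ℝ Z) := fun m =>
      (WeakDual.toStrongDual ⁻¹' closedBall (0 : StrongDual ℝ Z) 1) ∩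
      ((⋂ i ∈ Finset.range n, {w : WeakDual ℝ Z | w (x (L i)) ≤ a}) ∩
       (⋂ i ∈ Finset.Ico n m, {w : WeakDual ℝ Z | b ≤ w (x (L i))})) with hC
    have hrestcl : ∀ m, IsClosed ((⋂ i ∈ Finset.range n, {w : WeakDual ℝ Z | w (x (L i)) ≤ a}) ∩
       (⋂ i ∈ Finset.Ico n m, {w : WeakDual ℝ Z | b ≤ w (x (L i))})) := by
      intro m
      refine IsClosed.inter ?_ ?_
      · exact isClosed_biInter fun i _ =>
          isClosed_le (WeakDual.eval_continuous _) continuous_const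
      · exact isClosed_biInter fun i _ =>
          isClosed_le continuous_const (WeakDual.eval_continuous _)
    have hCc : ∀ m, IsCompact (C m) := fun m => (ballW_compact 1).inter_right (hrestcl m)
    have hCcl : ∀ m, IsClosed (C m) := fun m => (ballW_compact 1).isClosed.inter (hrestcl m)
    have hCne : ∀ m, (C m).Nonempty := by
      intro m
      obtain ⟨F, hF1, hFa, hFb⟩ := hreal n (max n m) (le_max_left _ _)
      refine ⟨StrongDual.toWeakDual F, toWeakDual_mem_ballW hF1, ?_, ?_⟩
      · refine Set.mem_iInter₂.2 fun i hi => ?_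
        have : (StrongDual.toWeakDual F) (x (L i)) = F (x (L i)) := rfl
        rw [Set.mem_setOf_eq, this]
        exact hFa i (Finset.mem_range.1 hi)
      · refine Set.mem_iInter₂.2 fun i hi => ?_
        have : (StrongDual.toWeakDual F) (x (L i)) = F (x (L i)) := rfl
        rw [Set.mem_setOf_eq, this]
        obtain ⟨h1, h2⟩ := Finset.mem_Ico.1 hi
        exact hFb i h1 (h2.trans_le (le_max_right _ _))
    have hCmono : ∀ {m m'}, m ≤ m' → C m' ⊆ C m := by
      intro m m' hmm w hw
      refine ⟨hw.1, hw.2.1, ?_⟩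
      refine Set.mem_iInter₂.2 fun i hi => ?_
      obtain ⟨h1, h2⟩ := Finset.mem_Ico.1 hi
      exact Set.mem_iInter₂.1 hw.2.2 i (Finset.mem_Ico.2 ⟨h1, h2.trans_le hmm⟩)
    have hdir : Directed (· ⊇ ·) C := fun m m' =>
      ⟨max m m', hCmono (le_max_left _ _), hCmono (le_max_right _ _)⟩
    obtain ⟨w, hw⟩ := IsCompact.nonempty_iInter_of_directed_nonempty_isCompact_isClosed
      C hdir hCne hCc hCcl
    have hwm : ∀ m, w ∈ C m := fun m => Set.mem_iInter.1 hw m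
    refine ⟨WeakDual.toStrongDual w, (mem_ballW_iff.1 (hwm 0).1), ?_, ?_⟩
    · intro i hi
      have := Set.mem_iInter₂.1 (hwm 0).2.1 i (Finset.mem_range.2 hi)
      exact this
    · intro i hi
      have := Set.mem_iInter₂.1 (hwm (i+1)).2.2 i (Finset.mem_Ico.2 ⟨hi, Nat.lt_succ_self i⟩)
      exact this
  choose Fn hFn1 hFn2 hFn3 using hFn
  -- F* : weak* cluster point of the Fn
  have hFwmem : ∀ n, StrongDual.toWeakDual (Fn n) ∈
      WeakDual.toStrongDual ⁻¹' closedBall (0 : StrongDual ℝ Z) 1 :=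
    fun n => toWeakDual_mem_ballW (hFn1 n)
  have hFw_le : Filter.map (fun n => StrongDual.toWeakDual (Fn n)) atTop ≤
      Filter.principal (WeakDual.toStrongDual ⁻¹' closedBall (0 : StrongDual ℝ Z) 1) := by
    rw [Filter.le_principal_iff, Filter.mem_map]
    exact Filter.univ_mem' hFwmem
  obtain ⟨Fsw, hFsmem, hFscl⟩ := (ballW_compact (E := Z) 1).exists_mapClusterPt hFw_le
  have hFs1 : ‖WeakDual.toStrongDual Fsw‖ ≤ 1 := mem_ballW_iff.1 hFsmem
  have hFsa : ∀ k, Fsw (x (L k)) ≤ a := by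
    intro k
    have hev : MapClusterPt (Fsw (x (L k))) atTop
        ((fun w : WeakDual ℝ Z => w (x (L k))) ∘ fun n => StrongDual.toWeakDual (Fn n)) :=
      hFscl.continuousAt_comp (WeakDual.eval_continuous (x (L k))).continuousAt
    refine cluster_le hev (n₀ := k + 1) ?_
    intro nn hnn
    have : (StrongDual.toWeakDual (Fn nn)) (x (L k)) = Fn nn (x (L k)) := rfl
    simp only [Function.comp_apply, this]
    exact hFn2 nn k hnn
  -- u : weak* cluster point of the ι(x (L k))
  have hseqmem : ∀ k, StrongDual.toWeakDual (inclusionInDoubleDual ℝ Z (x (L k))) ∈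
      WeakDual.toStrongDual ⁻¹' closedBall (0 : StrongDual ℝ (StrongDual ℝ Z)) M₀ :=
    fun k => toWeakDual_mem_ballW ((NormedSpace.double_dual_bound ℝ Z _).trans (hx _))
  have hseq_le : Filter.map (fun k => StrongDual.toWeakDual (inclusionInDoubleDual ℝ Z (x (L k)))) atTop ≤
      Filter.principal (WeakDual.toStrongDual ⁻¹' closedBall (0 : StrongDual ℝ (StrongDual ℝ Z)) M₀) := by
    rw [Filter.le_principal_iff, Filter.mem_map]
    exact Filter.univ_mem' hseqmem
  obtain ⟨uw, humem, hucl⟩ := (ballW_compact (E := StrongDual ℝ Z) M₀).exists_mapClusterPt hseq_le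
  set u : StrongDual ℝ (StrongDual ℝ Z) := WeakDual.toStrongDual uw with hudef
  have huclos : u ∈ wstarClosure ((inclusionInDoubleDual ℝ Z) '' (Set.range x)) := by
    show StrongDual.toWeakDual u ∈ closure (StrongDual.toWeakDual '' _)
    have h1 : StrongDual.toWeakDual u = uw := rfl
    rw [h1]
    have h2 : uw ∈ closure (Set.range fun k =>
        StrongDual.toWeakDual (inclusionInDoubleDual ℝ Z (x (L k)))) := by
      rw [mem_closure_iff_clusterPt]
      refine hucl.clusterPt.mono ?_
      rw [Filter.le_principal_iff, Filter.mem_map]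
      exact Filter.univ_mem' fun k => ⟨k, rfl⟩
    refine closure_mono ?_ h2
    rintro _ ⟨k, rfl⟩
    exact ⟨inclusionInDoubleDual ℝ Z (x (L k)), ⟨x (L k), ⟨L k, rfl⟩, rfl⟩, rfl⟩
  have hu_ev : ∀ GG : StrongDual ℝ Z, MapClusterPt (uw GG) atTop (fun k => GG (x (L k))) := by
    intro GG
    have hev : MapClusterPt (uw GG) atTop
        ((fun w : WeakDual ℝ (StrongDual ℝ Z) => w GG) ∘
          fun k => StrongDual.toWeakDual (inclusionInDoubleDual ℝ Z (x (L k)))) :=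
      hucl.continuousAt_comp (WeakDual.eval_continuous GG).continuousAt
    have heq : ((fun w : WeakDual ℝ (StrongDual ℝ Z) => w GG) ∘
        fun k => StrongDual.toWeakDual (inclusionInDoubleDual ℝ Z (x (L k)))) =
        fun k => GG (x (L k)) := by
      funext k
      rfl
    rwa [heq] at hev
  have hub : ∀ n, b ≤ uw (Fn n) := by
    intro n
    refine cluster_ge (hu_ev (Fn n)) (n₀ := n) ?_
    intro k hk
    exact hFn3 n k hk
  have hua : uw (WeakDual.toStrongDual Fsw) ≤ a := by
    refine cluster_le (hu_ev (WeakDual.toStrongDual Fsw)) (n₀ := 0) ?_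
    intro k _
    have : (WeakDual.toStrongDual Fsw) (x (L k)) = Fsw (x (L k)) := rfl
    rw [this]
    exact hFsa k
  -- distance bound
  have hdz : ∀ z : Z, (b - a) / 2 ≤ dist u (inclusionInDoubleDual ℝ Z z) := by
    intro z
    set d := dist u (inclusionInDoubleDual ℝ Z z) with hddef
    have hkey : ∀ GG : StrongDual ℝ Z, ‖GG‖ ≤ 1 → |u GG - (inclusionInDoubleDual ℝ Z z) GG| ≤ d := by
      intro GG hGG
      have h1 : u GG - (inclusionInDoubleDual ℝ Z z) GG =
          (u - inclusionInDoubleDual ℝ Z z) GG := by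
        rw [ContinuousLinearMap.sub_apply]
      rw [h1, ← Real.norm_eq_abs]
      calc ‖(u - inclusionInDoubleDual ℝ Z z) GG‖
          ≤ ‖u - inclusionInDoubleDual ℝ Z z‖ * ‖GG‖ :=
            (u - inclusionInDoubleDual ℝ Z z).le_opNorm GG
        _ ≤ ‖u - inclusionInDoubleDual ℝ Z z‖ * 1 := by
            refine mul_le_mul_of_nonneg_left hGG (by positivity)
        _ = d := by rw [mul_one, hddef]; exact (dist_eq_norm u _).symm
    have hFnz : ∀ n, b - d ≤ Fn n z := by
      intro n
      have h1 : |u (Fn n) - (inclusionInDoubleDual ℝ Z z) (Fn n)| ≤ d := hkey _ (hFn1 n)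
      have h2 : (inclusionInDoubleDual ℝ Z z) (Fn n) = Fn n z := NormedSpace.dual_def ℝ Z z (Fn n)
      have h3 : b ≤ u (Fn n) := hub n
      rw [h2] at h1
      have := abs_le.1 h1
      linarith [this.1, this.2]
    have hFsz : b - d ≤ Fsw z := by
      have hev : MapClusterPt (Fsw z) atTop
          ((fun w : WeakDual ℝ Z => w z) ∘ fun n => StrongDual.toWeakDual (Fn n)) :=
        hFscl.continuousAt_comp (WeakDual.eval_continuous z).continuousAt
      refine cluster_ge hev (n₀ := 0) ?_
      intro n _
      exact hFnz n
    have h4 : |u (WeakDual.toStrongDual Fsw) -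
        (inclusionInDoubleDual ℝ Z z) (WeakDual.toStrongDual Fsw)| ≤ d := hkey _ hFs1
    have h5 : (inclusionInDoubleDual ℝ Z z) (WeakDual.toStrongDual Fsw) =
        (WeakDual.toStrongDual Fsw) z := NormedSpace.dual_def ℝ Z z _
    have h6 : (WeakDual.toStrongDual Fsw) z = Fsw z := rfl
    rw [h5, h6] at h4
    have h7 : u (WeakDual.toStrongDual Fsw) = uw (WeakDual.toStrongDual Fsw) := rfl
    rw [h7] at h4
    have := abs_le.1 h4
    linarith [this.1, this.2, hua, hFsz]
  have hinf : (b - a) / 2 ≤ infDist u (Set.range (inclusionInDoubleDual ℝ Z)) := by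
    by_contra hlt
    push_neg at hlt
    have hne : (Set.range (inclusionInDoubleDual ℝ Z)).Nonempty := ⟨_, ⟨(0 : Z), rfl⟩⟩
    obtain ⟨y, ⟨z, rfl⟩, hy⟩ := (infDist_lt_iff hne).1 hlt
    exact absurd (hdz z) (not_le.2 hy)
  exact hinf.trans (le_wkMeasure hx huclos)

lemma G1 {M₀ : ℝ} (x : ℕ → Z) (hx : ∀ n, ‖x n‖ ≤ M₀) {h c : ℝ} (hh : 0 < h)
    (M : Set ℕ) (hM : M.Infinite)
    (hδ : c < deltaSeq (x ∘ Nat.nth (· ∈ M))) :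
    ∃ p q : ℕ, p ≤ Nat.floor (2 * M₀ / h) ∧ q ≤ Nat.floor (2 * M₀ / h) ∧
      c - 2*h < ((q : ℝ) * h - M₀) - (((p : ℝ)+1) * h - M₀) ∧
      ∃ F : StrongDual ℝ Z, ‖F‖ ≤ 1 ∧
        S8Comb.Osc (fun (F : StrongDual ℝ Z) k => F (x k) ≤ ((p:ℝ)+1)*h - M₀)
          (fun (F : StrongDual ℝ Z) k => ((q:ℝ)*h - M₀) ≤ F (x k)) F M := by
  classical
  set φ := Nat.nth (· ∈ M) with hφdef
  have hMset : (setOf (· ∈ M)).Infinite := by exact hM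
  have hφmono : StrictMono φ := Nat.nth_strictMono hMset
  have hφmem : ∀ k, φ k ∈ M := fun k => Nat.nth_mem_of_infinite hMset k
  unfold deltaSeq at hδ
  have hne : Nonempty ↥(closedBall (0 : StrongDual ℝ Z) 1) := ⟨0, mem_closedBall_self zero_le_one⟩
  have hex : ∃ f : ↥(closedBall (0 : StrongDual ℝ Z) 1), c < ⨅ n : ℕ,
      sSup {r : ℝ | ∃ i j : ℕ, n ≤ i ∧ n ≤ j ∧
        r = |(f : StrongDual ℝ Z) ((x ∘ φ) i) - (f : StrongDual ℝ Z) ((x ∘ φ) j)|} := by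
    by_contra hno
    push_neg at hno
    exact absurd hδ (not_lt.2 (ciSup_le hno))
  obtain ⟨f, hf⟩ := hex
  have hF1 : ‖(f : StrongDual ℝ Z)‖ ≤ 1 := by
    have := f.2
    rwa [mem_closedBall_zero_iff] at this
  set v : ℕ → ℝ := fun k => (f : StrongDual ℝ Z) ((x ∘ φ) k) with hvdef
  have hbdd : BddBelow (Set.range fun n : ℕ =>
      sSup {r : ℝ | ∃ i j : ℕ, n ≤ i ∧ n ≤ j ∧ r = |v i - v j|}) := by
    refine ⟨0, ?_⟩
    rintro _ ⟨n, rfl⟩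
    refine Real.sSup_nonneg fun r hr => ?_
    obtain ⟨i, j, _, _, rfl⟩ := hr
    exact abs_nonneg _
  have hSn : ∀ n : ℕ, c < sSup {r : ℝ | ∃ i j : ℕ, n ≤ i ∧ n ≤ j ∧ r = |v i - v j|} :=
    fun n => lt_of_lt_of_le hf (ciInf_le hbdd n)
  have hosc : ∀ n : ℕ, ∃ i j, n ≤ i ∧ n ≤ j ∧ v i + c < v j := by
    intro n
    have hSne : {r : ℝ | ∃ i j : ℕ, n ≤ i ∧ n ≤ j ∧ r = |v i - v j|}.Nonempty :=
      ⟨|v n - v n|, ⟨n, n, le_rfl, le_rfl, rfl⟩⟩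
    obtain ⟨r, hrS, hrc⟩ := exists_lt_of_lt_csSup hSne (hSn n)
    obtain ⟨i, j, h1, h2, rfl⟩ := hrS
    rcases lt_abs.1 hrc with hlt | hlt
    · exact ⟨j, i, h2, h1, by linarith⟩
    · exact ⟨i, j, h1, h2, by linarith⟩
  choose I J hI hJ hIJ using hosc
  have hM₀ : 0 ≤ M₀ := le_trans (norm_nonneg (x 0)) (hx 0)
  have hvb : ∀ k, |v k| ≤ M₀ := by
    intro k
    calc |v k| = ‖(f : StrongDual ℝ Z) ((x ∘ φ) k)‖ := (Real.norm_eq_abs _).symm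
      _ ≤ ‖(f : StrongDual ℝ Z)‖ * ‖(x ∘ φ) k‖ := ContinuousLinearMap.le_opNorm _ _
      _ ≤ 1 * M₀ := mul_le_mul hF1 (hx _) (norm_nonneg _) zero_le_one
      _ = M₀ := one_mul _
  set Nc := Nat.floor (2 * M₀ / h) with hNcdef
  set cl : ℝ → ℕ := fun y => Nat.floor ((y + M₀)/h) with hcldef
  have hclb : ∀ k, cl (v k) ≤ Nc := by
    intro k
    refine Nat.floor_le_floor ?_
    have h1 : v k ≤ M₀ := (abs_le.1 (hvb k)).2
    exact (div_le_div_iff_of_pos_right hh).2 (by linarith)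
  have hcl_le : ∀ k, (cl (v k) : ℝ) * h - M₀ ≤ v k := by
    intro k
    have h0 : 0 ≤ (v k + M₀)/h := div_nonneg (by linarith [(abs_le.1 (hvb k)).1]) hh.le
    have h1 := Nat.floor_le h0
    have h2 : (cl (v k) : ℝ) * h ≤ v k + M₀ := by
      rw [← le_div_iff₀ hh]
      exact h1
    linarith
  have hcl_gt : ∀ k, v k < ((cl (v k) : ℝ) + 1) * h - M₀ := by
    intro k
    have h1 := Nat.lt_floor_add_one ((v k + M₀)/h)
    have h2 : v k + M₀ < ((cl (v k) : ℝ) + 1) * h := by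
      rw [div_lt_iff₀ hh] at h1
      exact h1
    linarith
  set cf : ℕ → Fin (Nc+1) × Fin (Nc+1) := fun n =>
    (⟨cl (v (I n)), Nat.lt_succ_of_le (hclb _)⟩,
     ⟨cl (v (J n)), Nat.lt_succ_of_le (hclb _)⟩) with hcfdef
  obtain ⟨pq, hpq⟩ := Finite.exists_infinite_fiber cf
  have hJset : (cf ⁻¹' {pq}).Infinite := Set.infinite_coe_iff.1 hpq
  have hcells : ∀ n ∈ cf ⁻¹' {pq}, cl (v (I n)) = (pq.1 : ℕ) ∧ cl (v (J n)) = (pq.2 : ℕ) := by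
    intro n hn
    have heq : cf n = pq := hn
    exact ⟨congrArg (fun z : Fin (Nc+1) × Fin (Nc+1) => (z.1 : ℕ)) heq,
           congrArg (fun z : Fin (Nc+1) × Fin (Nc+1) => (z.2 : ℕ)) heq⟩
  obtain ⟨n₀, hn₀⟩ := hJset.nonempty
  have he1 : ((pq.1 : ℕ) : ℝ) * h - M₀ ≤ v (I n₀) := by
    have := hcl_le (I n₀)
    rwa [(hcells n₀ hn₀).1] at this
  have he2 : v (J n₀) < (((pq.2 : ℕ) : ℝ) + 1) * h - M₀ := by
    have := hcl_gt (J n₀)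
    rwa [(hcells n₀ hn₀).2] at this
  have he3 := hIJ n₀
  refine ⟨(pq.1 : ℕ), (pq.2 : ℕ), Nat.lt_succ_iff.1 pq.1.2, Nat.lt_succ_iff.1 pq.2.2,
    by nlinarith [he1, he2, he3], (f : StrongDual ℝ Z), hF1, ?_, ?_⟩
  · refine Set.infinite_of_forall_exists_gt ?_
    intro t
    obtain ⟨n, hn, hnt⟩ := hJset.exists_gt t
    refine ⟨φ (I n), ⟨hφmem _, ?_⟩, ?_⟩
    · have h1 : v (I n) < (((pq.1 : ℕ) : ℝ)+1)*h - M₀ := by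
        have := hcl_gt (I n)
        rwa [(hcells n hn).1] at this
      exact le_of_lt h1
    · calc t < n := hnt
        _ ≤ I n := hI n
        _ ≤ φ (I n) := hφmono.le_apply
  · refine Set.infinite_of_forall_exists_gt ?_
    intro t
    obtain ⟨n, hn, hnt⟩ := hJset.exists_gt t
    refine ⟨φ (J n), ⟨hφmem _, ?_⟩, ?_⟩
    · have h1 : ((pq.2 : ℕ) : ℝ)*h - M₀ ≤ v (J n) := by
        have := hcl_le (J n)
        rwa [(hcells n hn).2] at this
      exact h1
    · calc t < n := hnt
        _ ≤ J n := hJ n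
        _ ≤ φ (J n) := hφmono.le_apply

lemma G2 {α : Type*} (Pp : α → Set ℕ → Prop)
    (hmono : ∀ g (N M' : Set ℕ), N ⊆ M' → Pp g N → Pp g M') :
    ∀ (l : List α) (M0 : Set ℕ), M0.Infinite →
    (∀ N, N ⊆ M0 → N.Infinite → ∃ g ∈ l, Pp g N) →
    ∃ M1, M1 ⊆ M0 ∧ M1.Infinite ∧ ∃ g ∈ l, ∀ N, N ⊆ M1 → N.Infinite → Pp g N := by
  intro l
  induction l with
  | nil =>
    intro M0 hM0 hall
    obtain ⟨g, hg, _⟩ := hall M0 Set.Subset.rfl hM0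
    exact absurd hg List.not_mem_nil
  | cons g t ih =>
    intro M0 hM0 hall
    by_cases hc : ∃ M1, M1 ⊆ M0 ∧ M1.Infinite ∧ ¬ Pp g M1
    · obtain ⟨M1, h1, h2, h3⟩ := hc
      have hall' : ∀ N, N ⊆ M1 → N.Infinite → ∃ g' ∈ t, Pp g' N := by
        intro N hN hNi
        obtain ⟨g', hg', hp⟩ := hall N (hN.trans h1) hNi
        rcases List.mem_cons.1 hg' with rfl | hm
        · exact absurd (hmono _ N M1 hN hp) h3
        · exact ⟨g', hm, hp⟩
      obtain ⟨M2, hs, hinf, g', hg', hher⟩ := ih M1 h2 hall'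
      exact ⟨M2, hs.trans h1, hinf, g', List.mem_cons_of_mem _ hg', hher⟩
    · push_neg at hc
      exact ⟨M0, Set.Subset.rfl, hM0, g, List.mem_cons_self, fun N h1 h2 => hc N h1 h2⟩

lemma wkMeasure_nonneg (A : Set Z) : 0 ≤ wkMeasure A := by
  unfold wkMeasure dhat
  exact Real.iSup_nonneg fun _ => infDist_nonneg

lemma caRhoStar_nonneg (g : ℕ → StrongDual ℝ Z) : 0 ≤ caRhoStar g := by
  unfold caRhoStar
  refine Real.iSup_nonneg fun K => ?_
  refine Real.iInf_nonneg fun n => ?_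
  refine Real.sSup_nonneg fun r hr => ?_
  obtain ⟨i, j, _, _, vv, _, rfl⟩ := hr
  exact abs_nonneg _

set_option maxHeartbeats 1000000 in
lemma KEY (x : ℕ → Z) {M₀ : ℝ} (hM₀ : 0 < M₀) (hx : ∀ n, ‖x n‖ ≤ M₀)
    {ε : ℝ} (hε : 0 < ε) :
    ∃ φ : ℕ → ℕ, StrictMono φ ∧ deltaSeq (x ∘ φ) ≤ 2 * wkMeasure (Set.range x) + ε := by
  classical
  by_contra Hc
  push_neg at Hc
  set w := wkMeasure (Set.range x) with hwdef
  have hw0 : 0 ≤ w := wkMeasure_nonneg _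
  set h : ℝ := ε / 4 with hhdef
  have hhpos : 0 < h := by positivity
  set Nc := Nat.floor (2 * M₀ / h) with hNcdef
  set pairs : List (ℕ × ℕ) := (List.range (Nc+1)) ×ˢ (List.range (Nc+1)) with hpairsdef
  set Pp : ℕ × ℕ → Set ℕ → Prop := fun pq N =>
    ((2*w + ε) - 2*h < ((pq.2 : ℝ) * h - M₀) - (((pq.1 : ℝ)+1) * h - M₀)) ∧
    ∃ F : StrongDual ℝ Z, ‖F‖ ≤ 1 ∧
      S8Comb.Osc (fun (F : StrongDual ℝ Z) k => F (x k) ≤ ((pq.1:ℝ)+1)*h - M₀)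
        (fun (F : StrongDual ℝ Z) k => ((pq.2:ℝ)*h - M₀) ≤ F (x k)) F N with hPpdef
  have hmono : ∀ g (N M' : Set ℕ), N ⊆ M' → Pp g N → Pp g M' := by
    intro g N M' hsub hp
    obtain ⟨F, h1, h2⟩ := hp.2
    exact ⟨hp.1, F, h1, S8Comb.osc_mono hsub h2⟩
  have hall : ∀ N : Set ℕ, N ⊆ Set.univ → N.Infinite → ∃ g ∈ pairs, Pp g N := by
    intro N _ hN
    have hδ : 2*w + ε < deltaSeq (x ∘ Nat.nth (· ∈ N)) :=
      Hc (Nat.nth (· ∈ N)) (Nat.nth_strictMono (by simpa using hN))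
    obtain ⟨p, q, hp, hq, hgap, F, hF, hosc⟩ := G1 x hx hhpos N hN hδ
    refine ⟨(p, q), ?_, hgap, F, hF, hosc⟩
    rw [hpairsdef]
    exact List.mem_product.2 ⟨List.mem_range.2 (Nat.lt_succ_of_le hp),
      List.mem_range.2 (Nat.lt_succ_of_le hq)⟩
  obtain ⟨M1, _, hM1inf, g, hgmem, hher⟩ := G2 Pp hmono pairs Set.univ Set.infinite_univ hall
  obtain ⟨hgap, -⟩ := hher M1 Set.Subset.rfl hM1inf
  have hpers : S8Comb.Pers {F : StrongDual ℝ Z | ‖F‖ ≤ 1}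
      (fun (F : StrongDual ℝ Z) k => F (x k) ≤ ((g.1:ℝ)+1)*h - M₀)
      (fun (F : StrongDual ℝ Z) k => ((g.2:ℝ)*h - M₀) ≤ F (x k)) ∅ ∅ M1 := by
    intro N hsub hinf
    obtain ⟨F, h1, hosc⟩ := (hher N hsub hinf).2
    exact ⟨F, h1, ⟨fun i hi => absurd hi (Finset.notMem_empty i),
      fun i hi => absurd hi (Finset.notMem_empty i)⟩, hosc⟩
  obtain ⟨L, hLmono, hLreal⟩ := S8Comb.C2 M1 hM1inf hpers
  have hreal : ∀ n m : ℕ, n ≤ m → ∃ F : StrongDual ℝ Z, ‖F‖ ≤ 1 ∧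
      (∀ i, i < n → F (x (L i)) ≤ ((g.1:ℝ)+1)*h - M₀) ∧
      (∀ i, n ≤ i → i < m → ((g.2:ℝ)*h - M₀) ≤ F (x (L i))) := by
    intro n m hnm
    obtain ⟨F, hFG, hA, hB⟩ := hLreal n m hnm
    exact ⟨F, hFG, hA, hB⟩
  have hbnd := clusterBound x hx L (((g.1:ℝ)+1)*h - M₀) ((g.2:ℝ)*h - M₀) hreal
  rw [← hwdef] at hbnd
  have hh4 : h = ε / 4 := hhdef
  linarith [hgap, hbnd, hε]

end S8A

/-- If `ca_{ρ*}(x*_n) ≤ C·δ(x*_n)` for every bounded sequence in `X*`, then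
`wca_{ρ*}(x*_n) ≤ 2C·wk_{X*}({x*_n})` for every bounded sequence in `X*`. -/
theorem statement8 {X : Type*} [NormedAddCommGroup X] [NormedSpace ℝ X] [CompleteSpace X]
    (C : ℝ) (hC : 0 < C)
    (h : ∀ f : ℕ → StrongDual ℝ X, (∃ M : ℝ, ∀ n, ‖f n‖ ≤ M) → caRhoStar f ≤ C * deltaSeq f)
    (f : ℕ → StrongDual ℝ X) (hf : ∃ M : ℝ, ∀ n, ‖f n‖ ≤ M) :
    wcaRhoStar f ≤ 2 * C * wkMeasure (Set.range f) := by
  classical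
  obtain ⟨M, hM⟩ := hf
  have hM₀ : ∀ n, ‖f n‖ ≤ max M 1 := fun n => (hM n).trans (le_max_left _ _)
  have hM₀pos : (0:ℝ) < max M 1 := lt_of_lt_of_le one_pos (le_max_right _ _)
  refine le_of_forall_pos_le_add ?_
  intro ε hε
  obtain ⟨φ, hφmono, hδ⟩ := S8A.KEY f hM₀pos hM₀ (show (0:ℝ) < ε / C from div_pos hε hC)
  have h1 : wcaRhoStar f ≤ caRhoStar (f ∘ φ) := by
    have hb : BddBelow (Set.range fun φ' : {φ : ℕ → ℕ // StrictMono φ} =>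
        caRhoStar (f ∘ (φ' : ℕ → ℕ))) := by
      refine ⟨0, ?_⟩
      rintro _ ⟨φ', rfl⟩
      exact S8A.caRhoStar_nonneg _
    exact ciInf_le hb ⟨φ, hφmono⟩
  have h2 : caRhoStar (f ∘ φ) ≤ C * deltaSeq (f ∘ φ) :=
    h (f ∘ φ) ⟨max M 1, fun n => hM₀ _⟩
  calc wcaRhoStar f ≤ C * deltaSeq (f ∘ φ) := h1.trans h2
    _ ≤ C * (2 * wkMeasure (Set.range f) + ε / C) :=
        mul_le_mul_of_nonneg_left hδ hC.le
    _ = 2 * C * wkMeasure (Set.range f) + ε := by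
        field_simp

end
end

section
/- Let X be a Banach space and C > 0 such that wca_{ρ*}(x*_n) ≤ C·wk_{X*}({x*_n : n ∈ ℕ}) for every bounded sequence (x*_n) in X*. Then for every Banach space Y and every bounded linear operator T : X → Y, cc(T) ≤ 2C·wk_{X*}(T*(B_{Y*})), where T* : Y* → X* is the adjoint and B_{Y*} is the closed unit ball of Y*. -/
open Metric NormedSpace Filter Topology Set

noncomputable section

section AuxLemmas

open Filter

lemma dhat_nonneg' {Z : Type*} [NormedAddCommGroup Z] (A B : Set Z) : 0 ≤ dhat A B :=
  Real.iSup_nonneg fun _ => Metric.infDist_nonneg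

lemma wkMeasure_nonneg' {Z : Type*} [NormedAddCommGroup Z] [NormedSpace ℝ Z] (A : Set Z) :
    0 ≤ wkMeasure A :=
  dhat_nonneg' _ _

lemma norm_le_of_mem_wstarClosure {E : Type*} [NormedAddCommGroup E] [NormedSpace ℝ E]
    {A : Set (StrongDual ℝ E)} {R : ℝ} (hA : ∀ a ∈ A, ‖a‖ ≤ R) :
    ∀ g ∈ wstarClosure A, ‖g‖ ≤ R := by
  intro g hg
  have hcomp : IsCompact (WeakDual.toStrongDual ⁻¹' Metric.closedBall (0 : StrongDual ℝ E) R) :=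
    WeakDual.isCompact_closedBall (𝕜 := ℝ) 0 R
  have hclosed : IsClosed (WeakDual.toStrongDual ⁻¹' Metric.closedBall (0 : StrongDual ℝ E) R) :=
    hcomp.isClosed
  have hsub : StrongDual.toWeakDual '' A ⊆
      WeakDual.toStrongDual ⁻¹' Metric.closedBall (0 : StrongDual ℝ E) R := by
    rintro _ ⟨a, ha, rfl⟩
    simpa [mem_closedBall_zero_iff] using hA a ha
  have := closure_minimal hsub hclosed hg
  exact mem_closedBall_zero_iff.mp this

lemma dhat_mono_left' {Z : Type*} [NormedAddCommGroup Z] {A A' B : Set Z} (h : A ⊆ A')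
    {R : ℝ} (hR : ∀ a ∈ A', Metric.infDist a B ≤ R) : dhat A B ≤ dhat A' B := by
  have hbdd : BddAbove (Set.range fun a : A' => Metric.infDist (a : Z) B) := by
    refine ⟨R, ?_⟩
    rintro _ ⟨a, rfl⟩
    exact hR a a.2
  refine Real.iSup_le (fun a => ?_) (dhat_nonneg' _ _)
  exact le_ciSup hbdd (⟨a.1, h a.2⟩ : A')

lemma wkMeasure_mono' {Z : Type*} [NormedAddCommGroup Z] [NormedSpace ℝ Z] {A B : Set Z}
    (hAB : A ⊆ B) {R : ℝ} (hB : ∀ b ∈ B, ‖b‖ ≤ R) : wkMeasure A ≤ wkMeasure B := by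
  have hBR : ∀ a ∈ (inclusionInDoubleDual ℝ Z '' B), ‖a‖ ≤ R := by
    rintro _ ⟨b, hb, rfl⟩
    exact le_trans (NormedSpace.double_dual_bound ℝ Z b) (hB b hb)
  refine dhat_mono_left' ?_ (R := R) ?_
  · intro a ha
    have h2 : closure (StrongDual.toWeakDual '' (inclusionInDoubleDual ℝ Z '' A)) ⊆
        closure (StrongDual.toWeakDual '' (inclusionInDoubleDual ℝ Z '' B)) :=
      closure_mono (Set.image_mono (Set.image_mono hAB))
    exact h2 ha
  · intro a ha
    have h1 : ‖a‖ ≤ R := norm_le_of_mem_wstarClosure hBR a ha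
    calc Metric.infDist a (Set.range (inclusionInDoubleDual ℝ Z))
        ≤ dist a (inclusionInDoubleDual ℝ Z 0) :=
          Metric.infDist_le_dist_of_mem ⟨0, rfl⟩
      _ = ‖a‖ := by simp
      _ ≤ R := h1

lemma isWeaklyCompact_empty {Z : Type*} [NormedAddCommGroup Z] [NormedSpace ℝ Z] :
    IsWeaklyCompact (∅ : Set Z) := by
  unfold IsWeaklyCompact
  simp [isCompact_empty]

end AuxLemmas

/-- If `wca_{ρ*}(x*_n) ≤ C·wk_{X*}({x*_n})` for every bounded sequence in `X*`,
then for every Banach space `Y` and every operator `T : X → Y`,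
`cc(T) ≤ 2C·wk_{X*}(T*(B_{Y*}))`. -/
theorem statement9 {X : Type u} [NormedAddCommGroup X] [NormedSpace ℝ X] [CompleteSpace X]
    (C : ℝ) (hC : 0 < C)
    (h : ∀ f : ℕ → StrongDual ℝ X, (∃ M : ℝ, ∀ n, ‖f n‖ ≤ M) →
      wcaRhoStar f ≤ C * wkMeasure (Set.range f)) :
    ∀ (Y : Type v) [NormedAddCommGroup Y] [NormedSpace ℝ Y] [CompleteSpace Y]
      (T : X →L[ℝ] Y),
      cc T ≤ 2 * C * wkMeasure (adjointOp T '' closedBall 0 1) := by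
  intro Y _ _ _ T
  classical
  haveI : Nonempty {φ : ℕ → ℕ // StrictMono φ} := ⟨⟨id, strictMono_id⟩⟩
  set A : Set (StrongDual ℝ X) := adjointOp T '' closedBall 0 1 with hA
  set W : ℝ := wkMeasure A with hWdef
  set M : ℝ := ‖adjointOp T‖ with hMdef
  have hM0 : (0:ℝ) ≤ M := by rw [hMdef]; positivity
  have hW0 : (0:ℝ) ≤ W := wkMeasure_nonneg' A
  have hadj : ∀ (g : StrongDual ℝ Y) (v : X), adjointOp T g v = g (T v) := fun g v => rfl
  have hAball : ∀ b ∈ A, ‖b‖ ≤ M := by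
    rintro _ ⟨g, hg, rfl⟩
    have hg1 : ‖g‖ ≤ 1 := mem_closedBall_zero_iff.mp hg
    calc ‖adjointOp T g‖ ≤ M * ‖g‖ := (adjointOp T).le_opNorm g
      _ ≤ M * 1 := by nlinarith
      _ = M := mul_one M
  refine Real.sSup_le ?_ (by positivity)
  rintro r ⟨x, hx1, hx2, rfl⟩
  by_contra hcon
  push_neg at hcon
  set a : ℝ := ca (fun n => T (x n)) with hadef
  obtain ⟨c, c'', hwc, hcc'', hc''a⟩ :
      ∃ c c'' : ℝ, 2*C*W < c ∧ c < c'' ∧ c'' < a :=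
    ⟨(2*C*W + a)/2, ((2*C*W + a)/2 + a)/2, by linarith, by linarith, by linarith⟩
  have hc0 : (0:ℝ) < c := lt_of_le_of_lt (by positivity) hwc
  have hc''0 : (0:ℝ) < c'' := hc0.trans hcc''
  set δ : ℝ := (c'' - c)/2 with hδdef
  have hδ0 : (0:ℝ) < δ := by rw [hδdef]; linarith
  -- Step 1: selection of far-apart pairs
  have hsel : ∀ n : ℕ, ∃ i j : ℕ, n ≤ i ∧ n ≤ j ∧ c'' < ‖T (x i) - T (x j)‖ := by
    intro n
    have hne : {r : ℝ | ∃ i j : ℕ, n ≤ i ∧ n ≤ j ∧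
        r = ‖(fun k => T (x k)) i - (fun k => T (x k)) j‖}.Nonempty :=
      ⟨‖(fun k => T (x k)) n - (fun k => T (x k)) n‖, n, n, le_rfl, le_rfl, rfl⟩
    have hlow : a ≤ sSup {r : ℝ | ∃ i j : ℕ, n ≤ i ∧ n ≤ j ∧
        r = ‖(fun k => T (x k)) i - (fun k => T (x k)) j‖} := by
      rw [hadef]
      unfold ca
      refine ciInf_le ⟨0, ?_⟩ n
      rintro _ ⟨m, rfl⟩
      refine Real.sSup_nonneg ?_
      rintro r ⟨i, j, _, _, rfl⟩
      positivity
    obtain ⟨r, hrS, hr⟩ := exists_lt_of_lt_csSup hne (lt_of_lt_of_le hc''a hlow)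
    obtain ⟨i, j, hi, hj, rfl⟩ := hrS
    exact ⟨i, j, hi, hj, hr⟩
  choose iF jF hiF hjF hnorm using hsel
  have hvne : ∀ n, T (x (iF n)) - T (x (jF n)) ≠ 0 := by
    intro n h0
    have h1 := hnorm n
    rw [h0, norm_zero] at h1
    linarith
  have hy : ∀ n, ∃ g : StrongDual ℝ Y, ‖g‖ = 1 ∧
      g (T (x (iF n)) - T (x (jF n))) = ‖T (x (iF n)) - T (x (jF n))‖ :=
    fun n => exists_dual_vector ℝ _ (norm_ne_zero_iff.mpr (hvne n))
  choose y hy1 hy2 using hy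
  set f : ℕ → StrongDual ℝ X := fun n => adjointOp T (y n) with hfdef
  set z : ℕ → X := fun n => (2⁻¹ : ℝ) • (x (iF n) - x (jF n)) with hzdef
  have hfz : ∀ n, c''/2 < f n (z n) := by
    intro n
    have h1 : f n (z n) = (2⁻¹ : ℝ) * ‖T (x (iF n)) - T (x (jF n))‖ := by
      rw [hfdef]
      simp only [hadj]
      have hTz : T (z n) = (2⁻¹ : ℝ) • (T (x (iF n)) - T (x (jF n))) := by
        rw [hzdef]; simp [map_smul, map_sub]
      rw [hTz, map_smul, hy2 n, smul_eq_mul]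
    rw [h1]
    have h2 := hnorm n
    linarith
  have hznorm : ∀ n, ‖z n‖ ≤ 1 := by
    intro n
    have h2 : ‖x (iF n) - x (jF n)‖ ≤ 2 := by
      calc ‖x (iF n) - x (jF n)‖ ≤ ‖x (iF n)‖ + ‖x (jF n)‖ := norm_sub_le _ _
        _ ≤ 1 + 1 := add_le_add (hx1 _) (hx1 _)
        _ = 2 := by norm_num
    calc ‖z n‖ = ‖(2⁻¹:ℝ)‖ * ‖x (iF n) - x (jF n)‖ := by rw [hzdef]; exact norm_smul _ _
      _ ≤ 2⁻¹ * 2 := by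
          rw [Real.norm_eq_abs, abs_of_pos (by norm_num : (0:ℝ) < 2⁻¹)]
          nlinarith
      _ = 1 := by norm_num
  have hznull : ∀ g : StrongDual ℝ X, Tendsto (fun m => g (z m)) atTop (nhds 0) := by
    intro g
    obtain ⟨l, hl⟩ := hx2 g
    have hiT : Tendsto iF atTop atTop := tendsto_atTop_mono hiF tendsto_id
    have hjT : Tendsto jF atTop atTop := tendsto_atTop_mono hjF tendsto_id
    have h1 : Tendsto (fun m => g (x (iF m))) atTop (nhds l) := hl.comp hiT
    have h2 : Tendsto (fun m => g (x (jF m))) atTop (nhds l) := hl.comp hjT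
    have h3 := (h1.sub h2).const_mul (2⁻¹ : ℝ)
    simp only [sub_self, mul_zero] at h3
    have h4 : (fun m => g (z m)) = fun m => (2⁻¹:ℝ) * (g (x (iF m)) - g (x (jF m))) := by
      funext m
      rw [hzdef]
      simp [map_smul, map_sub, smul_eq_mul]
    rw [h4]
    exact h3
  have hfM : ∀ n, ‖f n‖ ≤ M := by
    intro n
    rw [hfdef]
    calc ‖adjointOp T (y n)‖ ≤ M * ‖y n‖ := (adjointOp T).le_opNorm (y n)
      _ = M * 1 := by rw [hy1 n]
      _ = M := mul_one M
  -- element bound for the caRhoStar sets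
  have hel : ∀ (φ : ℕ → ℕ) (K' : Set X), K' ⊆ closedBall 0 1 → ∀ (n : ℕ) (r : ℝ),
      r ∈ {r : ℝ | ∃ i j : ℕ, n ≤ i ∧ n ≤ j ∧ ∃ v ∈ K',
        r = |(f ∘ φ) i v - (f ∘ φ) j v|} → 0 ≤ r ∧ r ≤ 2*M := by
    rintro φ K' hK' n _ ⟨i, j, hi, hj, v, hv, rfl⟩
    refine ⟨abs_nonneg _, ?_⟩
    have hv1 : ‖v‖ ≤ 1 := mem_closedBall_zero_iff.mp (hK' hv)
    have hb : ∀ k : ℕ, |f k v| ≤ M := by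
      intro k
      calc |f k v| = ‖f k v‖ := (Real.norm_eq_abs _).symm
        _ ≤ ‖f k‖ * ‖v‖ := (f k).le_opNorm v
        _ ≤ M * 1 := mul_le_mul (hfM _) hv1 (norm_nonneg _) hM0
        _ = M := mul_one M
    calc |(f ∘ φ) i v - (f ∘ φ) j v| ≤ |(f ∘ φ) i v| + |(f ∘ φ) j v| := abs_sub _ _
      _ ≤ M + M := add_le_add (hb _) (hb _)
      _ = 2*M := by ring
  -- Key: lower bound for caRhoStar along any subsequence
  have key1 : ∀ φ : {φ : ℕ → ℕ // StrictMono φ}, c/2 ≤ caRhoStar (f ∘ φ.1) := by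
    rintro ⟨φ, hφ⟩
    set K : Set X := insert (0 : X) (Set.range fun m => z (φ m)) with hKdef
    have hK1 : K ⊆ closedBall 0 1 := by
      intro v hv
      rcases Set.mem_insert_iff.mp hv with rfl | ⟨m, rfl⟩
      · simp
      · simpa [mem_closedBall_zero_iff] using hznorm (φ m)
    have hK2 : IsWeaklyCompact K := by
      have hinj : Function.Injective (topDualPairing ℝ X).flip := by
        intro v w hvw
        refine (NormedSpace.eq_iff_forall_dual_eq ℝ).mpr fun g => ?_
        simpa [topDualPairing_apply] using LinearMap.congr_fun hvw g
      have ht : Tendsto (fun m => toWeakSpace ℝ X (z (φ m))) atTop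
          (nhds (toWeakSpace ℝ X 0)) := by
        refine (WeakBilin.tendsto_iff_forall_eval_tendsto _ hinj).mpr ?_
        intro g
        have h5 := (hznull g).comp hφ.tendsto_atTop
        show Tendsto (fun i => g (z (φ i))) atTop (𝓝 (g 0))
        rw [map_zero]
        exact h5
      have himg : toWeakSpace ℝ X '' K =
          insert (toWeakSpace ℝ X 0) (Set.range fun m => toWeakSpace ℝ X (z (φ m))) := by
        rw [hKdef, Set.image_insert_eq]
        congr 1
        exact (Set.range_comp _ _).symm
      unfold IsWeaklyCompact
      rw [himg]
      exact ht.isCompact_insert_range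
    have hbddS : BddAbove (Set.range
        fun K' : {K : Set X // K ⊆ closedBall 0 1 ∧ IsWeaklyCompact K} =>
        ⨅ n : ℕ, sSup {r : ℝ | ∃ i j : ℕ, n ≤ i ∧ n ≤ j ∧ ∃ v ∈ K'.1,
          r = |(f ∘ φ) i v - (f ∘ φ) j v|}) := by
      refine ⟨2*M, ?_⟩
      rintro _ ⟨K', rfl⟩
      refine le_trans (ciInf_le ⟨0, ?_⟩ 0) ?_
      · rintro _ ⟨n, rfl⟩
        exact Real.sSup_nonneg (fun r hr => (hel φ K'.1 K'.2.1 n r hr).1)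
      · exact Real.sSup_le (fun r hr => (hel φ K'.1 K'.2.1 0 r hr).2) (by positivity)
    have hinner : c/2 ≤ ⨅ n : ℕ, sSup {r : ℝ | ∃ i j : ℕ, n ≤ i ∧ n ≤ j ∧ ∃ v ∈ K,
        r = |(f ∘ φ) i v - (f ∘ φ) j v|} := by
      refine le_ciInf fun n => ?_
      by_contra hlt
      push_neg at hlt
      have hbb : BddAbove {r : ℝ | ∃ i j : ℕ, n ≤ i ∧ n ≤ j ∧ ∃ v ∈ K,
          r = |(f ∘ φ) i v - (f ∘ φ) j v|} :=
        ⟨2*M, fun r hr => (hel φ K hK1 n r hr).2⟩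
      have hlow : ∀ i j, n ≤ i → n ≤ j → δ < f (φ j) (z (φ i)) := by
        intro i j hi hj
        have hmem : |(f ∘ φ) i (z (φ i)) - (f ∘ φ) j (z (φ i))| ∈
            {r : ℝ | ∃ i j : ℕ, n ≤ i ∧ n ≤ j ∧ ∃ v ∈ K,
              r = |(f ∘ φ) i v - (f ∘ φ) j v|} :=
          ⟨i, j, hi, hj, z (φ i), Set.mem_insert_iff.mpr (Or.inr ⟨i, rfl⟩), rfl⟩
        have h1 : |f (φ i) (z (φ i)) - f (φ j) (z (φ i))| < c/2 :=
          lt_of_le_of_lt (le_csSup hbb hmem) hlt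
        have h2 := hfz (φ i)
        have h3 := abs_lt.mp h1
        rw [hδdef]
        linarith [h3.1, h3.2]
      set u : ℕ → WeakDual ℝ X := fun k => StrongDual.toWeakDual (f (φ k)) with hudef
      have humem : ∀ k, u k ∈ WeakDual.toStrongDual ⁻¹' closedBall (0 : StrongDual ℝ X) M := by
        intro k
        simpa [hudef, mem_closedBall_zero_iff] using hfM (φ k)
      have hle : Filter.map u atTop ≤ Filter.principal
          (WeakDual.toStrongDual ⁻¹' closedBall (0 : StrongDual ℝ X) M) := by
        rw [le_principal_iff, Filter.mem_map]
        exact Filter.univ_mem' humem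
      obtain ⟨g, -, hgcl⟩ :=
        (WeakDual.isCompact_closedBall (𝕜 := ℝ) (0 : StrongDual ℝ X) M).exists_mapClusterPt hle
      have hgev : ∀ i, n ≤ i → δ ≤ g (z (φ i)) := by
        intro i hi
        by_contra hgl
        push_neg at hgl
        have hopen : IsOpen {w : WeakDual ℝ X | w (z (φ i)) < δ} :=
          isOpen_Iio.preimage (WeakDual.eval_continuous (z (φ i)))
        have hnb : {w : WeakDual ℝ X | w (z (φ i)) < δ} ∈ nhds g := hopen.mem_nhds hgl
        have hfreq := (mapClusterPt_iff_frequently.mp hgcl) _ hnb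
        obtain ⟨j, hj, hjlt⟩ := (Filter.frequently_atTop.mp hfreq) n
        have h6 : δ < f (φ j) (z (φ i)) := hlow i j hi hj
        have heq : (u j) (z (φ i)) = f (φ j) (z (φ i)) := rfl
        have h7 : (u j) (z (φ i)) < δ := hjlt
        rw [heq] at h7
        linarith
      have hgd := hznull (WeakDual.toStrongDual g)
      have hcomp := hgd.comp hφ.tendsto_atTop
      have hev : ∀ᶠ i in atTop,
          (WeakDual.toStrongDual g) (z (φ i)) < δ := by
        have := hcomp.eventually (eventually_lt_nhds hδ0)
        simpa [Function.comp] using this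
      obtain ⟨i, hilt, hin⟩ := (hev.and (eventually_ge_atTop n)).exists
      have h8 : δ ≤ g (z (φ i)) := hgev i hin
      have h9 : (WeakDual.toStrongDual g) (z (φ i)) = g (z (φ i)) := rfl
      rw [h9] at hilt
      linarith
    calc c/2 ≤ ⨅ n : ℕ, sSup {r : ℝ | ∃ i j : ℕ, n ≤ i ∧ n ≤ j ∧ ∃ v ∈ K,
          r = |(f ∘ φ) i v - (f ∘ φ) j v|} := hinner
      _ ≤ caRhoStar (f ∘ φ) := by
          unfold caRhoStar
          exact le_ciSup hbddS ⟨K, hK1, hK2⟩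
  have key2 : c/2 ≤ wcaRhoStar f := by
    unfold wcaRhoStar
    exact le_ciInf key1
  have hrange : Set.range f ⊆ A := by
    rintro _ ⟨n, rfl⟩
    exact ⟨y n, by simp [mem_closedBall_zero_iff, hy1 n], rfl⟩
  have hwk : wkMeasure (Set.range f) ≤ W := wkMeasure_mono' hrange hAball
  have hmain := h f ⟨M, hfM⟩
  have hfin : c/2 ≤ C * W :=
    le_trans key2 (le_trans hmain (mul_le_mul_of_nonneg_left hwk hC.le))
  linarith

end
end

section
/- Let X be a Banach space whose dual X* has the Schur property, i.e., every weakly null sequence in X* converges to 0 in norm. Then ca_ρ(x_n) = δ(x_n) for every bounded sequence (x_n) in X. -/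
open Metric NormedSpace Filter Topology Set

noncomputable section

section EberleinSmulian

variable {Z : Type*} [NormedAddCommGroup Z] [NormedSpace ℝ Z]

lemma pairing_flip_injective :
    Function.Injective ⇑((topDualPairing ℝ Z).flip) := by
  intro a b hab
  refine (NormedSpace.eq_iff_forall_dual_eq ℝ).mpr fun g => ?_
  exact LinearMap.congr_fun hab g

/-- Eberlein–Šmulian (the direction we need): every sequence in a weakly compact set has a
subsequence converging weakly to an element of the set. -/
lemma exists_weak_subseq {K : Set Z} (hK : IsWeaklyCompact K)
    (f : ℕ → Z) (hf : ∀ n, f n ∈ K) :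
    ∃ g ∈ K, ∃ φ : ℕ → ℕ, StrictMono φ ∧
      ∀ Φ : StrongDual ℝ Z, Tendsto (fun m => Φ (f (φ m))) atTop (𝓝 (Φ g)) := by
  haveI : T2Space (WeakSpace ℝ Z) :=
    (WeakBilin.isEmbedding (pairing_flip_injective (Z := Z))).t2Space
  -- the closed linear span of the sequence
  set W : Submodule ℝ Z := (Submodule.span ℝ (Set.range f)).topologicalClosure with hWdef
  have hWclosed : IsClosed (W : Set Z) := Submodule.isClosed_topologicalClosure _
  have hWsep : TopologicalSpace.IsSeparable (W : Set Z) := by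
    rw [hWdef, Submodule.topologicalClosure_coe]
    exact ((Set.countable_range f).isSeparable.span).closure
  obtain ⟨c, hc_count, hc_sub⟩ := hWsep
  obtain ⟨w, hw⟩ : ∃ w : ℕ → Z, c ∪ {0} ⊆ Set.range w := by
    obtain ⟨w, hw⟩ := (hc_count.union (Set.countable_singleton 0)).exists_eq_range
      (Set.union_nonempty.mpr (Or.inr ⟨0, rfl⟩))
    exact ⟨w, hw.subset⟩
  -- a countable separating family of functionals for W
  choose D hD1 hD2 using fun i : ℕ => exists_dual_vector'' ℝ (w i)
  have hsep : ∀ z ∈ (W : Set Z), (∀ i, D i z = 0) → z = 0 := by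
    intro z hz h0
    have hzc : z ∈ closure (Set.range w) :=
      closure_mono (Set.subset_union_left.trans hw) (hc_sub hz)
    have hz2 : ∀ ε : ℝ, 0 < ε → ‖z‖ ≤ 2 * ε := by
      intro ε hε
      obtain ⟨y, ⟨i, rfl⟩, hy⟩ := Metric.mem_closure_iff.mp hzc ε hε
      have h1 : ‖w i‖ ≤ ε := by
        have e1 : (D i) (w i) = (D i) (w i - z) := by rw [map_sub, h0 i, sub_zero]
        have e2 : |(D i) (w i - z)| ≤ ‖w i - z‖ := by
          calc |(D i) (w i - z)| ≤ ‖D i‖ * ‖w i - z‖ := (D i).le_opNorm _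
          _ ≤ 1 * ‖w i - z‖ := by
              exact mul_le_mul_of_nonneg_right (hD1 i) (norm_nonneg _)
          _ = ‖w i - z‖ := one_mul _
        have e3 : ‖w i - z‖ ≤ ε := by
          rw [← dist_eq_norm, dist_comm]
          exact hy.le
        calc ‖w i‖ = (D i) (w i) := (hD2 i).symm
        _ ≤ |(D i) (w i - z)| := by rw [← e1]; exact le_abs_self _
        _ ≤ ε := e2.trans e3
      calc ‖z‖ = ‖(z - w i) + w i‖ := by rw [sub_add_cancel]
      _ ≤ ‖z - w i‖ + ‖w i‖ := norm_add_le _ _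
      _ ≤ ε + ε := by
          refine add_le_add ?_ h1
          rw [← dist_eq_norm]; exact hy.le
      _ = 2 * ε := by ring
    have : ‖z‖ ≤ 0 := le_of_forall_pos_le_add (by
      intro ε hε
      have := hz2 (ε / 2) (by linarith)
      linarith)
    simpa using le_antisymm this (norm_nonneg z)
  -- the weakly compact set containing the sequence
  set C : Set (WeakSpace ℝ Z) := closure (toWeakSpace ℝ Z '' Set.range f) with hCdef
  have hrange_W : Set.range f ⊆ (W : Set Z) := by
    intro z hz
    exact (Submodule.span ℝ (Set.range f)).le_topologicalClosure (Submodule.subset_span hz)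
  have hCK : C ⊆ toWeakSpace ℝ Z '' K :=
    closure_minimal (Set.image_mono (Set.range_subset_iff.mpr hf)) hK.isClosed
  have hCcomp : IsCompact C := hK.of_isClosed_subset isClosed_closure hCK
  have hWweak : closure (toWeakSpace ℝ Z '' (W : Set Z)) = toWeakSpace ℝ Z '' (W : Set Z) := by
    rw [← (W.convex).toWeakSpace_closure ℝ, hWclosed.closure_eq]
  have hCW : C ⊆ toWeakSpace ℝ Z '' (W : Set Z) := by
    rw [← hWweak]
    exact closure_mono (Set.image_mono hrange_W)
  -- the evaluation map into ℝ^ℕ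
  set T : WeakSpace ℝ Z → (ℕ → ℝ) := fun z i => D i ((toWeakSpace ℝ Z).symm z) with hTdef
  have hTcont : Continuous T := by
    refine continuous_pi fun i => ?_
    exact WeakBilin.eval_continuous ((topDualPairing ℝ Z).flip) (D i)
  have hTinj : ∀ z ∈ C, ∀ z' ∈ C, T z = T z' → z = z' := by
    intro z hz z' hz' hT
    obtain ⟨a, ha, rfl⟩ := hCW hz
    obtain ⟨b, hb, rfl⟩ := hCW hz'
    have hab : ∀ i, D i (a - b) = 0 := by
      intro i
      have h := congrFun hT i
      simp only [hTdef, LinearEquiv.symm_apply_apply] at h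
      rw [map_sub, h, sub_self]
    have : a - b = 0 := hsep _ (W.sub_mem ha hb) hab
    rw [sub_eq_zero] at this
    rw [this]
  haveI : CompactSpace C := isCompact_iff_compactSpace.mp hCcomp
  have hTC : Continuous (fun z : C => T z) := hTcont.comp continuous_subtype_val
  have hinjC : Function.Injective (fun z : C => T z) := by
    intro z z' h
    exact Subtype.ext (hTinj z z.2 z' z'.2 h)
  have hemb := hTC.isClosedEmbedding hinjC
  haveI : FirstCountableTopology C := hemb.toIsEmbedding.firstCountableTopology
  have hmem : ∀ m, toWeakSpace ℝ Z (f m) ∈ C := fun m =>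
    subset_closure ⟨f m, Set.mem_range_self m, rfl⟩
  obtain ⟨a, φ, hφ, ha⟩ :=
    SeqCompactSpace.tendsto_subseq (X := C) (fun m => (⟨_, hmem m⟩ : C))
  have ha' : Tendsto (fun m => toWeakSpace ℝ Z (f (φ m))) atTop (𝓝 (a : WeakSpace ℝ Z)) :=
    (continuous_subtype_val.tendsto a).comp ha
  obtain ⟨g, hgK, hga⟩ := hCK a.2
  refine ⟨g, hgK, φ, hφ, fun Φ => ?_⟩
  rw [← hga] at ha'
  exact (WeakBilin.tendsto_iff_forall_eval_tendsto _
    (pairing_flip_injective (Z := Z))).mp ha' Φ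

end EberleinSmulian

/-- If `X*` has the Schur property, then `ca_ρ(x_n) = δ(x_n)` for every
bounded sequence `(x_n)` in `X`. -/
theorem statement13 {X : Type*} [NormedAddCommGroup X] [NormedSpace ℝ X] [CompleteSpace X]
    (hSchur : ∀ f : ℕ → StrongDual ℝ X, WeaklyNull f →
      Tendsto (fun n => ‖f n‖) atTop (nhds 0))
    (x : ℕ → X) (hx : ∃ M : ℝ, ∀ n, ‖x n‖ ≤ M) :
    caRho x = deltaSeq x := by
  classical
  obtain ⟨M, hM⟩ := hx
  have hM0 : 0 ≤ M := (norm_nonneg _).trans (hM 0)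
  have hxd : ∀ i j, ‖x i - x j‖ ≤ 2 * M := by
    intro i j
    calc ‖x i - x j‖ ≤ ‖x i‖ + ‖x j‖ := norm_sub_le _ _
    _ ≤ 2 * M := by linarith [hM i, hM j]
  have key : ∀ f : StrongDual ℝ X, ‖f‖ ≤ 1 → ∀ i j, |f (x i) - f (x j)| ≤ 2 * M := by
    intro f hf i j
    calc |f (x i) - f (x j)| = ‖f (x i - x j)‖ := by rw [map_sub, Real.norm_eq_abs]
    _ ≤ ‖f‖ * ‖x i - x j‖ := f.le_opNorm _
    _ ≤ 1 * (2 * M) := mul_le_mul hf (hxd i j) (norm_nonneg _) zero_le_one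
    _ = 2 * M := one_mul _
  -- abbreviations
  set A : StrongDual ℝ X → ℕ → Set ℝ :=
    fun f n => {r : ℝ | ∃ i j : ℕ, n ≤ i ∧ n ≤ j ∧ r = |f (x i) - f (x j)|} with hAdef
  set B : Set (StrongDual ℝ X) → ℕ → Set ℝ :=
    fun K n => {r : ℝ | ∃ i j : ℕ, n ≤ i ∧ n ≤ j ∧ ∃ f ∈ K, r = |f (x i) - f (x j)|} with hBdef
  have hA_ne : ∀ f n, (A f n).Nonempty := fun f n =>
    ⟨|f (x n) - f (x n)|, n, n, le_rfl, le_rfl, rfl⟩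
  have hA_bdd : ∀ f : StrongDual ℝ X, ‖f‖ ≤ 1 → ∀ n, BddAbove (A f n) := by
    intro f hf n
    refine ⟨2 * M, ?_⟩
    rintro r ⟨i, j, -, -, rfl⟩
    exact key f hf i j
  have hA_sSup_nonneg : ∀ f : StrongDual ℝ X, ‖f‖ ≤ 1 → ∀ n, 0 ≤ sSup (A f n) := by
    intro f hf n
    have h0 : (0 : ℝ) ∈ A f n := ⟨n, n, le_rfl, le_rfl, by simp⟩
    exact le_csSup (hA_bdd f hf n) h0
  have hA_sSup_le : ∀ f : StrongDual ℝ X, ‖f‖ ≤ 1 → ∀ n, sSup (A f n) ≤ 2 * M := by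
    intro f hf n
    refine csSup_le (hA_ne f n) ?_
    rintro r ⟨i, j, -, -, rfl⟩
    exact key f hf i j
  have hF_nonneg : ∀ f : StrongDual ℝ X, ‖f‖ ≤ 1 → 0 ≤ ⨅ n, sSup (A f n) := fun f hf =>
    le_ciInf (hA_sSup_nonneg f hf)
  have hF_bddBelow : ∀ f : StrongDual ℝ X, ‖f‖ ≤ 1 →
      BddBelow (Set.range fun n => sSup (A f n)) := by
    intro f hf
    refine ⟨0, ?_⟩
    rintro r ⟨n, rfl⟩
    exact hA_sSup_nonneg f hf n
  have hF_le : ∀ f : StrongDual ℝ X, ‖f‖ ≤ 1 → (⨅ n, sSup (A f n)) ≤ 2 * M := fun f hf =>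
    ciInf_le_of_le (hF_bddBelow f hf) 0 (hA_sSup_le f hf 0)
  -- δ as a ciSup
  haveI hne_ball : Nonempty (closedBall (0 : StrongDual ℝ X) 1) :=
    ⟨⟨0, mem_closedBall_self zero_le_one⟩⟩
  have hdelta_eq : deltaSeq x = ⨆ f : (closedBall (0 : StrongDual ℝ X) 1),
      ⨅ n, sSup (A (f : StrongDual ℝ X) n) := rfl
  have hdelta_bdd : BddAbove (Set.range fun f : (closedBall (0 : StrongDual ℝ X) 1) =>
      ⨅ n, sSup (A (f : StrongDual ℝ X) n)) := by
    refine ⟨2 * M, ?_⟩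
    rintro r ⟨f, rfl⟩
    exact hF_le f (mem_closedBall_zero_iff.mp f.2)
  have hF_le_delta : ∀ f : StrongDual ℝ X, ∀ hf : f ∈ closedBall (0 : StrongDual ℝ X) 1,
      (⨅ n, sSup (A f n)) ≤ deltaSeq x := by
    intro f hf
    rw [hdelta_eq]
    exact le_ciSup hdelta_bdd (⟨f, hf⟩ : (closedBall (0 : StrongDual ℝ X) 1))
  have hdelta_nonneg : 0 ≤ deltaSeq x := by
    refine le_trans (hF_nonneg 0 (by simp)) (hF_le_delta 0 ?_)
    exact mem_closedBall_self zero_le_one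
  -- facts about B
  have hB_bdd : ∀ K : Set (StrongDual ℝ X), K ⊆ closedBall 0 1 → ∀ n, BddAbove (B K n) := by
    intro K hK n
    refine ⟨2 * M, ?_⟩
    rintro r ⟨i, j, -, -, f, hfK, rfl⟩
    exact key f (mem_closedBall_zero_iff.mp (hK hfK)) i j
  have hB_sSup_nonneg : ∀ K : Set (StrongDual ℝ X), K ⊆ closedBall 0 1 → ∀ n,
      0 ≤ sSup (B K n) := by
    intro K hK n
    rcases Set.eq_empty_or_nonempty K with rfl | ⟨f₀, hf₀⟩
    · have : B ∅ n = ∅ := by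
        rw [hBdef]
        ext r
        simp
      rw [this, Real.sSup_empty]
    · have h0 : (0 : ℝ) ∈ B K n := ⟨n, n, le_rfl, le_rfl, f₀, hf₀, by simp⟩
      exact le_csSup (hB_bdd K hK n) h0
  have hB_sSup_le : ∀ K : Set (StrongDual ℝ X), K ⊆ closedBall 0 1 → ∀ n,
      sSup (B K n) ≤ 2 * M := by
    intro K hK n
    rcases Set.eq_empty_or_nonempty K with rfl | ⟨f₀, hf₀⟩
    · have : B ∅ n = ∅ := by
        rw [hBdef]; ext r; simp
      rw [this, Real.sSup_empty]; linarith
    · refine csSup_le ⟨|f₀ (x n) - f₀ (x n)|, n, n, le_rfl, le_rfl, f₀, hf₀, rfl⟩ ?_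
      rintro r ⟨i, j, -, -, f, hfK, rfl⟩
      exact key f (mem_closedBall_zero_iff.mp (hK hfK)) i j
  have hG_bddBelow : ∀ K : Set (StrongDual ℝ X), K ⊆ closedBall 0 1 →
      BddBelow (Set.range fun n => sSup (B K n)) := by
    intro K hK
    refine ⟨0, ?_⟩
    rintro r ⟨n, rfl⟩
    exact hB_sSup_nonneg K hK n
  haveI hne_K : Nonempty {K : Set (StrongDual ℝ X) // K ⊆ closedBall 0 1 ∧ IsWeaklyCompact K} := by
    refine ⟨⟨∅, Set.empty_subset _, ?_⟩⟩
    unfold IsWeaklyCompact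
    rw [Set.image_empty]
    exact isCompact_empty
  have hcaRho_eq : caRho x = ⨆ K : {K : Set (StrongDual ℝ X) // K ⊆ closedBall 0 1 ∧
      IsWeaklyCompact K}, ⨅ n, sSup (B K.1 n) := rfl
  have hcaRho_bdd : BddAbove (Set.range fun K : {K : Set (StrongDual ℝ X) //
      K ⊆ closedBall 0 1 ∧ IsWeaklyCompact K} => ⨅ n, sSup (B K.1 n)) := by
    refine ⟨2 * M, ?_⟩
    rintro r ⟨K, rfl⟩
    exact ciInf_le_of_le (hG_bddBelow K.1 K.2.1) 0 (hB_sSup_le K.1 K.2.1 0)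
  refine le_antisymm ?_ ?_
  · -- caRho ≤ delta
    rw [hcaRho_eq]
    refine ciSup_le ?_
    rintro ⟨K, hK1, hK2⟩
    rcases Set.eq_empty_or_nonempty K with rfl | hKne
    · have hBempty : ∀ n, B ∅ n = ∅ := by
        intro n; rw [hBdef]; ext r; simp
      simp only [hBempty, Real.sSup_empty, ciInf_const]
      exact hdelta_nonneg
    · refine le_of_forall_pos_le_add ?_
      intro ε hε
      set ε' : ℝ := ε / 3 with hε'def
      have hε' : 0 < ε' := by positivity
      set G : ℝ := ⨅ n, sSup (B K n) with hGdef
      -- choose witnesses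
      have hch : ∀ n : ℕ, ∃ i j : ℕ, ∃ f : StrongDual ℝ X, n ≤ i ∧ n ≤ j ∧ f ∈ K ∧
          G - ε' < |f (x i) - f (x j)| := by
        intro n
        have h1 : G ≤ sSup (B K n) := ciInf_le (hG_bddBelow K hK1) n
        have h2 : G - ε' < sSup (B K n) := by linarith
        have hBne : (B K n).Nonempty := by
          obtain ⟨f₀, hf₀⟩ := hKne
          exact ⟨|f₀ (x n) - f₀ (x n)|, n, n, le_rfl, le_rfl, f₀, hf₀, rfl⟩
        obtain ⟨r, ⟨i, j, hi, hj, f, hfK, rfl⟩, hr⟩ := exists_lt_of_lt_csSup hBne h2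
        exact ⟨i, j, f, hi, hj, hfK, hr⟩
      choose I J ff hI hJ hffK hflt using hch
      -- extract weakly convergent subsequence
      obtain ⟨g, hgK, φ, hφ, hconv⟩ := exists_weak_subseq hK2 ff hffK
      set h : ℕ → StrongDual ℝ X := fun m => ff (φ m) - g with hhdef
      have hWN : WeaklyNull h := by
        intro Ψ
        have h1 := (hconv Ψ).sub_const (Ψ g)
        rw [sub_self] at h1
        refine h1.congr fun m => ?_
        rw [hhdef]
        simp [map_sub]
      have hnorm := hSchur h hWN
      -- oscillation of the limit
      have hg1 : ‖g‖ ≤ 1 := mem_closedBall_zero_iff.mp (hK1 hgK)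
      have hFg : (⨅ n, sSup (A g n)) ≤ deltaSeq x := hF_le_delta g (hK1 hgK)
      obtain ⟨N, hN⟩ : ∃ N, sSup (A g N) < deltaSeq x + ε' :=
        exists_lt_of_ciInf_lt (lt_of_le_of_lt hFg (lt_add_of_pos_right _ hε'))
      have hgosc : ∀ i j, N ≤ i → N ≤ j → |g (x i) - g (x j)| < deltaSeq x + ε' := by
        intro i j hi hj
        refine lt_of_le_of_lt ?_ hN
        exact le_csSup (hA_bdd g hg1 N) ⟨i, j, hi, hj, rfl⟩
      -- pick a good index
      have h1 : ∀ᶠ m in atTop, ‖h m‖ * (2 * M) < ε' := by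
        have h2 : Tendsto (fun m => ‖h m‖ * (2 * M)) atTop (𝓝 (0 * (2 * M))) :=
          hnorm.mul_const _
        rw [zero_mul] at h2
        exact h2.eventually (gt_mem_nhds hε')
      have h2 : ∀ᶠ m in atTop, N ≤ φ m :=
        eventually_atTop.mpr ⟨N, fun m hm => hm.trans (hφ.le_apply)⟩
      obtain ⟨m, hm1, hm2⟩ := (h1.and h2).exists
      set n := φ m with hndef
      set i := I n with hidef
      set j := J n with hjdef
      have hiN : N ≤ i := hm2.trans (hI n)
      have hjN : N ≤ j := hm2.trans (hJ n)
      have e0 : G - ε' < |ff n (x i) - ff n (x j)| := hflt n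
      have e1 : ff n (x i) - ff n (x j) =
          (g (x i) - g (x j)) + (h m (x i) - h m (x j)) := by
        simp only [hhdef, hndef, ContinuousLinearMap.sub_apply]
        ring
      have e2 : |h m (x i) - h m (x j)| ≤ ‖h m‖ * (2 * M) := by
        calc |h m (x i) - h m (x j)| = ‖(h m) (x i - x j)‖ := by
              rw [map_sub, Real.norm_eq_abs]
        _ ≤ ‖h m‖ * ‖x i - x j‖ := (h m).le_opNorm _
        _ ≤ ‖h m‖ * (2 * M) := mul_le_mul_of_nonneg_left (hxd i j) (norm_nonneg _)
      have e3 : |ff n (x i) - ff n (x j)| ≤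
          |g (x i) - g (x j)| + |h m (x i) - h m (x j)| := by
        rw [e1]; exact abs_add_le _ _
      have := hgosc i j hiN hjN
      have hfinal : G < deltaSeq x + 3 * ε' := by
        have := e0.trans_le e3
        nlinarith [hm1, e2]
      rw [hε'def] at hfinal
      linarith
  · -- delta ≤ caRho
    rw [hdelta_eq]
    refine ciSup_le ?_
    rintro ⟨f, hf⟩
    have hsingle : IsWeaklyCompact ({f} : Set (StrongDual ℝ X)) := by
      unfold IsWeaklyCompact
      rw [Set.image_singleton]
      exact isCompact_singleton
    have hAB : ∀ n, A f n = B {f} n := by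
      intro n
      ext r
      constructor
      · rintro ⟨i, j, hi, hj, rfl⟩
        exact ⟨i, j, hi, hj, f, rfl, rfl⟩
      · rintro ⟨i, j, hi, hj, f', hf', rfl⟩
        rw [Set.mem_singleton_iff] at hf'
        exact ⟨i, j, hi, hj, by rw [hf']⟩
    have heq : (⨅ n, sSup (A f n)) = ⨅ n, sSup (B ({f} : Set (StrongDual ℝ X)) n) := by
      congr 1
      ext n
      rw [hAB n]
    rw [heq, hcaRho_eq]
    exact le_ciSup hcaRho_bdd (⟨{f}, Set.singleton_subset_iff.mpr hf, hsingle⟩ :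
      {K : Set (StrongDual ℝ X) // K ⊆ closedBall 0 1 ∧ IsWeaklyCompact K})

end
end

section
/- Let K be a compact Hausdorff space and (f_n) a bounded sequence in C(K), the real Banach space of continuous functions on K with the supremum norm. Then: (i) δ(f_n) = sup_{x∈K} inf_{n∈ℕ} sup_{i,j≥n} |f_i(x) − f_j(x)|; and (ii) for every finite regular Borel measure μ on K and every ε > 0 there exists a compact set L ⊆ K with μ(K∖L) ≤ ε such that inf_{n∈ℕ} sup_{i,j≥n} sup_{x∈L} |f_i(x) − f_j(x)| ≤ δ(f_n). -/
open Metric NormedSpace Filter Topology Set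
set_option maxHeartbeats 1000000

noncomputable section

section Stmt18AuxSect
namespace Stmt18Aux

variable {K : Type*} [TopologicalSpace K] [CompactSpace K]

/-- σ-convex combinations of the tail `{g k : k ≥ n}`. -/
def simonsW (g : ℕ → C(K, ℝ)) (n : ℕ) : Set C(K, ℝ) :=
  {h | ∃ lam : ℕ → ℝ, (∀ k, 0 ≤ lam k) ∧ (∀ k, k < n → lam k = 0) ∧
    HasSum lam 1 ∧ HasSum (fun k => lam k • g k) h}

omit [CompactSpace K] in
lemma self_mem_simonsW (g : ℕ → C(K, ℝ)) (n : ℕ) : g n ∈ simonsW g n := by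
  classical
  refine ⟨fun k => if k = n then 1 else 0, ?_, ?_, ?_, ?_⟩
  · intro k; dsimp only; split <;> norm_num
  · intro k hk; simp [Nat.ne_of_lt hk]
  · exact hasSum_ite_eq n 1
  · have : (fun k => (if k = n then (1:ℝ) else 0) • g k) = fun k => if k = n then g n else 0 := by
      funext k
      by_cases h : k = n
      · subst h; simp
      · simp [h]
    rw [this]
    exact hasSum_ite_eq n (g n)

omit [CompactSpace K] in
lemma simonsW_mono (g : ℕ → C(K, ℝ)) {m n : ℕ} (h : m ≤ n) : simonsW g n ⊆ simonsW g m := by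
  rintro x ⟨lam, h1, h2, h3, h4⟩
  exact ⟨lam, h1, fun k hk => h2 k (lt_of_lt_of_le hk h), h3, h4⟩

lemma norm_le_of_mem_simonsW {g : ℕ → C(K, ℝ)} {M : ℝ} (hM : ∀ k, ‖g k‖ ≤ M)
    {n : ℕ} {h : C(K, ℝ)} (hh : h ∈ simonsW g n) : ‖h‖ ≤ M := by
  obtain ⟨lam, h1, _, h3, h4⟩ := hh
  have hnorm : ∀ k, ‖lam k • g k‖ ≤ lam k * M := by
    intro k
    calc ‖lam k • g k‖ = |lam k| * ‖g k‖ := by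
          rw [norm_smul (lam k) (g k), Real.norm_eq_abs]
      _ = lam k * ‖g k‖ := by rw [abs_of_nonneg (h1 k)]
      _ ≤ lam k * M := mul_le_mul_of_nonneg_left (hM k) (h1 k)
  calc ‖h‖ = ‖∑' k, lam k • g k‖ := by rw [h4.tsum_eq]
    _ ≤ 1 * M := tsum_of_norm_bounded (h3.mul_right M) hnorm
    _ = M := one_mul M

/-- `simonsW g n` is closed under finite convex combinations. -/
lemma sum_mem_simonsW {g : ℕ → C(K, ℝ)} {n : ℕ} {ι : Type*} (s : Finset ι)
    (w : ι → ℝ) (hw : ∀ i ∈ s, 0 ≤ w i) (hw1 : ∑ i ∈ s, w i = 1)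
    (h : ι → C(K, ℝ)) (hmem : ∀ i ∈ s, h i ∈ simonsW g n) :
    (∑ i ∈ s, w i • h i) ∈ simonsW g n := by
  classical
  choose lam hlam0 hlamz hlam1 hlamS using fun (i : {x // x ∈ s}) => hmem i i.2
  refine ⟨fun k => ∑ i : {x // x ∈ s}, w i * lam i k, ?_, ?_, ?_, ?_⟩
  · intro k
    exact Finset.sum_nonneg fun i _ => mul_nonneg (hw i i.2) (hlam0 i k)
  · intro k hk
    refine Finset.sum_eq_zero fun i _ => ?_
    rw [hlamz i k hk, mul_zero]
  · have h1 : ∀ i ∈ (Finset.univ : Finset {x // x ∈ s}),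
        HasSum (fun k => w i.1 * lam i k) (w i.1) := by
      intro i _
      simpa using (hlam1 i).mul_left (w i.1)
    have h2 := hasSum_sum h1
    have : ∑ i : {x // x ∈ s}, w i.1 = 1 := by
      rw [← hw1, ← Finset.sum_attach s w, Finset.univ_eq_attach]
    rwa [this] at h2
  · have h1 : ∀ i ∈ (Finset.univ : Finset {x // x ∈ s}),
        HasSum (fun k => (w i.1 * lam i k) • g k) (w i.1 • h i.1) := by
      intro i _
      have := (hlamS i).const_smul (w i.1)
      simpa [smul_smul] using this
    have h2 := hasSum_sum h1
    have e1 : (fun k => ∑ i : {x // x ∈ s}, (w i.1 * lam i k) • g k)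
        = fun k => (∑ i : {x // x ∈ s}, w i.1 * lam i k) • g k := by
      funext k
      rw [Finset.sum_smul]
    have e2 : (∑ i : {x // x ∈ s}, w i.1 • h i.1) = ∑ i ∈ s, w i • h i := by
      rw [← Finset.sum_attach s (fun i => w i • h i), Finset.univ_eq_attach]
    rw [e1, e2] at h2
    exact h2

lemma half_pow_sum : ∀ {n m : ℕ}, n ≤ m →
    ∑ k ∈ Finset.Ico n m, ((2:ℝ)⁻¹)^(k+1) = (2⁻¹:ℝ)^n - (2⁻¹:ℝ)^m := by
  intro n m h
  induction m, h using Nat.le_induction with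
  | base => simp
  | succ m hm ih =>
    rw [Finset.sum_Ico_succ_top hm, ih, pow_succ]
    ring

/-- Simons' inequality, in the concrete form we need. -/
lemma simons [Nonempty K] (g : ℕ → C(K, ℝ)) (M : ℝ) (hM : ∀ k, ‖g k‖ ≤ M)
    (d ε : ℝ) (hd : ∀ h ∈ simonsW g 0, d ≤ ‖h‖) (hε : 0 < ε) :
    ∃ x : K, ∀ n : ℕ, ∃ k, n ≤ k ∧ d - ε ≤ |g k x| := by
  classical
  set Q : ℝ := (2:ℝ)⁻¹ with hQ
  have hQ0 : (0:ℝ) < Q := by norm_num [hQ]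
  have hQ1 : Q < 1 := by norm_num [hQ]
  have hM0 : 0 ≤ M := le_trans (norm_nonneg _) (hM 0)
  haveI hne : ∀ n, Nonempty (simonsW g n) := fun n => ⟨⟨g n, self_mem_simonsW g n⟩⟩
  -- the infimum functional
  set a : ℕ → C(K, ℝ) → ℝ :=
    fun n p => ⨅ w : simonsW g n, ‖p + Q^n • (w : C(K, ℝ))‖ with ha
  have ha_bdd : ∀ n (p : C(K, ℝ)),
      BddBelow (range fun w : simonsW g n => ‖p + Q^n • (w : C(K, ℝ))‖) := by
    intro n p
    exact ⟨0, by rintro r ⟨w, rfl⟩; exact norm_nonneg _⟩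
  have ha_le : ∀ n (p : C(K, ℝ)) (w : C(K, ℝ)), w ∈ simonsW g n →
      a n p ≤ ‖p + Q^n • w‖ := by
    intro n p w hw
    exact ciInf_le (ha_bdd n p) ⟨w, hw⟩
  -- selection
  have hsel : ∀ n (p : C(K, ℝ)), ∃ w : C(K, ℝ), w ∈ simonsW g n ∧
      ‖p + Q^n • w‖ ≤ a n p + ε/4 * (4⁻¹:ℝ)^n := by
    intro n p
    have hlt : a n p < a n p + ε/4 * (4⁻¹:ℝ)^n := by
      have : (0:ℝ) < ε/4 * (4⁻¹:ℝ)^n := by positivity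
      linarith
    obtain ⟨w, hw⟩ := exists_lt_of_ciInf_lt hlt
    exact ⟨w, w.2, le_of_lt hw⟩
  choose sel hselmem hselval using hsel
  -- the recursively defined partial sums
  set pF : ℕ → C(K, ℝ) := fun n => Nat.rec 0 (fun m p => p + Q^(m+1) • sel m p) n with hpFdef
  set G : ℕ → C(K, ℝ) := fun n => sel n (pF n) with hG
  have hpF : ∀ n, pF (n+1) = pF n + Q^(n+1) • G n := fun n => rfl
  have hGmem : ∀ n, G n ∈ simonsW g n := fun n => hselmem n (pF n)
  have hkey : ∀ n, ‖pF n + Q^n • G n‖ ≤ a n (pF n) + ε/4 * (4⁻¹:ℝ)^n :=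
    fun n => hselval n (pF n)
  have hGnorm : ∀ n, ‖G n‖ ≤ M := fun n => norm_le_of_mem_simonsW hM (hGmem n)
  -- summability
  have hgeo : Summable fun k : ℕ => Q^k := summable_geometric_of_lt_one (le_of_lt hQ0) hQ1
  have hbound : ∀ k : ℕ, ‖Q^(k+1) • G k‖ ≤ Q^(k+1) * M := by
    intro k
    rw [norm_smul (Q^(k+1)) (G k), Real.norm_eq_abs, abs_of_pos (pow_pos hQ0 _)]
    exact mul_le_mul_of_nonneg_left (hGnorm k) (le_of_lt (pow_pos hQ0 _))
  have hsum : Summable fun k => Q^(k+1) • G k := by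
    apply Summable.of_norm_bounded (g := fun k => Q^(k+1) * M) _ hbound
    exact (((summable_nat_add_iff 1).mpr hgeo).mul_right M)
  set gs : C(K, ℝ) := ∑' k, Q^(k+1) • G k with hgs
  have hpF_eq : ∀ n, pF n = ∑ k ∈ Finset.range n, Q^(k+1) • G k := by
    intro n
    induction n with
    | zero => simp [hpFdef]
    | succ m ih => rw [hpF m, ih, Finset.sum_range_succ]
  have hdecomp : ∀ n, gs = pF n + ∑' k, Q^(k+n+1) • G (k+n) := by
    intro n
    rw [hpF_eq n, hgs]
    exact (Summable.sum_add_tsum_nat_add n hsum).symm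
  -- tail sums and their bounds
  have htail_summable : ∀ n, Summable fun k => Q^(k+n+1) • G (k+n) := by
    intro n
    exact (summable_nat_add_iff n).mpr hsum
  have htail_norm : ∀ n, ‖(∑' k, Q^(k+n+1) • G (k+n))‖ ≤ Q^n * M := by
    intro n
    have h1 : ∀ k : ℕ, ‖Q^(k+n+1) • G (k+n)‖ ≤ (Q^n * M) * Q^(k+1) := by
      intro k
      have := hbound (k+n)
      calc ‖Q^(k+n+1) • G (k+n)‖ ≤ Q^(k+n+1) * M := this
        _ = (Q^n * M) * Q^(k+1) := by ring
    have h2 : HasSum (fun k : ℕ => (Q^n * M) * Q^(k+1)) ((Q^n * M) * 1) := by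
      have hh : HasSum (fun k : ℕ => Q^k) (1 - Q)⁻¹ :=
        hasSum_geometric_of_lt_one (le_of_lt hQ0) hQ1
      have hh2 : HasSum (fun k : ℕ => Q^(k+1)) 1 := by
        have := (hasSum_nat_add_iff' 1).mpr hh
        simp only [Finset.range_one, Finset.sum_singleton, pow_zero] at this
        have h3 : (1 - Q)⁻¹ - 1 = 1 := by norm_num [hQ]
        rwa [h3] at this
      exact hh2.mul_left _
    calc ‖(∑' k, Q^(k+n+1) • G (k+n))‖ ≤ (Q^n * M) * 1 := tsum_of_norm_bounded h2 h1
      _ = Q^n * M := mul_one _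
  -- (P5) : a n (pF n) ≤ ‖gs‖
  have hgs_ge : ∀ n, a n (pF n) ≤ ‖gs‖ := by
    intro n
    by_contra hcon
    push_neg at hcon
    set δ : ℝ := (a n (pF n) - ‖gs‖) / 2 with hδ
    have hδ0 : 0 < δ := by simp only [hδ]; linarith
    -- choose m large
    obtain ⟨m₀, hm₀⟩ : ∃ m₀ : ℕ, Q^m₀ * (2*M) < δ := by
      have : Tendsto (fun m : ℕ => Q^m * (2*M)) atTop (nhds (0 * (2*M))) :=
        (tendsto_pow_atTop_nhds_zero_of_lt_one (le_of_lt hQ0) hQ1).mul_const _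
      rw [zero_mul] at this
      have := this.eventually (eventually_lt_nhds hδ0)
      exact this.exists
    set m : ℕ := max n m₀ with hm
    have hnm : n ≤ m + 1 := le_trans (le_max_left _ _) (Nat.le_succ m)
    set c : ℝ := Q^n - Q^(m+1) with hc
    have hceq : c = ∑ k ∈ Finset.Ico n (m+1), Q^(k+1) := (half_pow_sum hnm).symm
    have hc0 : 0 < c := by
      rw [hc]
      have : Q^(m+1) < Q^n := pow_lt_pow_right_of_lt_one₀ hQ0 hQ1 (lt_of_le_of_lt (le_max_left n m₀) (Nat.lt_succ_self m))
      linarith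
    -- the normalized convex combination
    set u : C(K, ℝ) := ∑ k ∈ Finset.Ico n (m+1), (Q^(k+1) / c) • G k with hu
    have humem : u ∈ simonsW g n := by
      apply sum_mem_simonsW _ _ _ _ _ _
      · intro i hi
        positivity
      · rw [← Finset.sum_div, ← hceq, div_self (ne_of_gt hc0)]
      · intro i hi
        exact simonsW_mono g (Finset.mem_Ico.mp hi).1 (hGmem i)
    have hunorm : ‖u‖ ≤ M := norm_le_of_mem_simonsW hM humem
    -- key identity : Q^n • u = (Q^n/c) • (pF (m+1) - pF n)
    have hv : pF (m+1) - pF n = c • u := by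
      rw [hpF_eq (m+1), hpF_eq n, hu, Finset.smul_sum]
      rw [← Finset.sum_Ico_eq_sub _ hnm]
      congr 1
      funext k
      rw [smul_smul, mul_div_cancel₀ _ (ne_of_gt hc0)]
    have hvnorm : ‖pF (m+1) - pF n‖ ≤ c * M := by
      rw [hv, norm_smul c u, Real.norm_eq_abs, abs_of_pos hc0]
      exact mul_le_mul_of_nonneg_left hunorm (le_of_lt hc0)
    -- estimate
    have hest : ‖pF n + Q^n • u - gs‖ ≤ Q^m * (2*M) := by
      have hpm : pF (m+1) = pF n + c • u := by rw [← hv]; abel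
      have hid : pF n + Q^n • u - gs
          = (Q^n/c - 1) • (pF (m+1) - pF n) - (gs - pF (m+1)) := by
        have h9 : (Q ^ n / c - 1) * c = Q ^ n - c := by field_simp
        rw [hv, hpm, smul_smul, h9, sub_smul]
        abel
      rw [hid]
      have h1 : ‖(Q^n/c - 1) • (pF (m+1) - pF n)‖ ≤ Q^(m+1) * M := by
        rw [norm_smul (Q^n/c - 1) (pF (m+1) - pF n), Real.norm_eq_abs]
        have he : Q^n/c - 1 = Q^(m+1)/c := by
          field_simp [hc]
          rw [hc]; ring
        rw [he, abs_of_pos (by positivity)]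
        calc Q^(m+1)/c * ‖pF (m+1) - pF n‖ ≤ Q^(m+1)/c * (c * M) := by
              apply mul_le_mul_of_nonneg_left hvnorm (by positivity)
          _ = Q^(m+1) * M := by field_simp
      have h2 : ‖gs - pF (m+1)‖ ≤ Q^(m+1) * M := by
        have := hdecomp (m+1)
        have heq : gs - pF (m+1) = ∑' k, Q^(k+(m+1)+1) • G (k+(m+1)) := by
          rw [this]; abel
        rw [heq]
        exact htail_norm (m+1)
      calc ‖(Q^n/c - 1) • (pF (m+1) - pF n) - (gs - pF (m+1))‖
          ≤ ‖(Q^n/c - 1) • (pF (m+1) - pF n)‖ + ‖gs - pF (m+1)‖ := norm_sub_le _ _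
        _ ≤ Q^(m+1) * M + Q^(m+1) * M := add_le_add h1 h2
        _ ≤ Q^m * (2*M) := by
            rw [pow_succ]
            nlinarith [mul_nonneg (mul_nonneg (le_of_lt (pow_pos hQ0 m)) hM0)
              (show (0:ℝ) ≤ 1 - Q by linarith)]
    have : a n (pF n) ≤ ‖gs‖ + Q^m * (2*M) := by
      calc a n (pF n) ≤ ‖pF n + Q^n • u‖ := ha_le n (pF n) u humem
        _ ≤ ‖gs‖ + ‖pF n + Q^n • u - gs‖ := by
            have h10 : gs + (pF n + Q^n • u - gs) = pF n + Q^n • u := by abel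
            calc ‖pF n + Q^n • u‖ = ‖gs + (pF n + Q^n • u - gs)‖ := by rw [h10]
              _ ≤ ‖gs‖ + ‖pF n + Q^n • u - gs‖ := norm_add_le _ _
        _ ≤ ‖gs‖ + Q^m * (2*M) := by linarith [hest]
    have hQm : Q^m * (2*M) < δ := by
      calc Q^m * (2*M) ≤ Q^m₀ * (2*M) := by
            apply mul_le_mul_of_nonneg_right _ (by linarith)
            exact pow_le_pow_of_le_one (le_of_lt hQ0) (le_of_lt hQ1) (le_max_right n m₀)
        _ < δ := hm₀
    simp only [hδ] at this hQm
    set T := Q ^ m * (2 * M) with hT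
    set A := a n (pF n) with hA2
    set Y := ‖gs‖ with hY
    linarith
  -- geometric series summing to 1
  have hh2 : HasSum (fun k : ℕ => Q^(k+1)) 1 := by
    have hh : HasSum (fun k : ℕ => Q^k) (1 - Q)⁻¹ :=
      hasSum_geometric_of_lt_one (le_of_lt hQ0) hQ1
    have := (hasSum_nat_add_iff' 1).mpr hh
    simp only [Finset.range_one, Finset.sum_singleton, pow_zero] at this
    have h3 : (1 - Q)⁻¹ - 1 = 1 := by norm_num [hQ]
    rwa [h3] at this
  -- maximizer of |gs|
  obtain ⟨x₀, -, hx₀⟩ := isCompact_univ.exists_isMaxOn univ_nonempty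
    ((map_continuous gs).abs.continuousOn)
  have hx₀' : ∀ y, |gs y| ≤ |gs x₀| := fun y => hx₀ (mem_univ y)
  have hnorm_gs : ‖gs‖ = |gs x₀| := by
    apply le_antisymm
    · exact (ContinuousMap.norm_le _ (abs_nonneg _)).mpr (fun x => by
        rw [Real.norm_eq_abs]; exact hx₀' x)
    · rw [← Real.norm_eq_abs]; exact gs.norm_coe_le_norm x₀
  set σ : ℝ := if 0 ≤ gs x₀ then 1 else -1 with hσ
  have hσabs : |σ| = 1 := by rw [hσ]; split <;> norm_num
  set e : C(K, ℝ) →L[ℝ] ℝ := σ • (ContinuousMap.evalCLM ℝ x₀) with he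
  have he_apply : ∀ h : C(K, ℝ), e h = σ * h x₀ := fun h => rfl
  have he_gs : e gs = ‖gs‖ := by
    rw [he_apply gs, hnorm_gs]
    by_cases h0 : 0 ≤ gs x₀
    · rw [hσ, if_pos h0, one_mul, abs_of_nonneg h0]
    · push_neg at h0
      rw [hσ, if_neg (not_le.mpr h0), abs_of_neg h0]; ring
  have he_le : ∀ h : C(K, ℝ), e h ≤ ‖h‖ := by
    intro h
    calc e h ≤ |e h| := le_abs_self _
      _ = |σ| * |h x₀| := by rw [he_apply h, abs_mul]
      _ = |h x₀| := by rw [hσabs, one_mul]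
      _ ≤ ‖h‖ := by rw [← Real.norm_eq_abs]; exact h.norm_coe_le_norm x₀
  -- e on tails of simonsW, under a bound hypothesis
  have he_W : ∀ (cc : ℝ) (N : ℕ), (∀ k, N ≤ k → |g k x₀| ≤ cc) →
      ∀ (n : ℕ), N ≤ n → ∀ h ∈ simonsW g n, e h ≤ cc := by
    rintro cc N hbd n hn h ⟨lam, h1, h2, h3, h4⟩
    have h5 : HasSum (fun k => e (lam k • g k)) (e h) := e.hasSum h4
    have h6 : ∀ k, e (lam k • g k) ≤ lam k * cc := by
      intro k
      rcases lt_or_ge k n with hk | hk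
      · rw [h2 k hk]; simp
      · have h7 : e (lam k • g k) = lam k * (σ * g k x₀) := by
          rw [map_smul, smul_eq_mul, he_apply]
        rw [h7]
        apply mul_le_mul_of_nonneg_left _ (h1 k)
        calc σ * g k x₀ ≤ |σ * g k x₀| := le_abs_self _
          _ = |g k x₀| := by rw [abs_mul, hσabs, one_mul]
          _ ≤ cc := hbd k (le_trans hn hk)
    have h7 : HasSum (fun k => lam k * cc) (1 * cc) := h3.mul_right cc
    have h8 := hasSum_le h6 h5 h7
    linarith [h8]
  -- the main invariant, by induction
  have hIN : ∀ n : ℕ, e (pF n) + Q^n * (‖gs‖ - ε/2) + (4⁻¹:ℝ)^n * (ε/2) ≤ ‖gs‖ := by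
    intro n
    induction n with
    | zero =>
      have hz : pF 0 = 0 := rfl
      rw [hz, map_zero, pow_zero, pow_zero]
      linarith
    | succ n ih =>
      have h6 : e (pF n) + Q^n * e (G n) ≤ ‖gs‖ + ε/4 * (4⁻¹:ℝ)^n := by
        have h7 : e (pF n + Q^n • G n) = e (pF n) + Q^n * e (G n) := by
          rw [map_add, map_smul, smul_eq_mul]
        calc e (pF n) + Q^n * e (G n) = e (pF n + Q^n • G n) := h7.symm
          _ ≤ ‖pF n + Q^n • G n‖ := he_le _
          _ ≤ a n (pF n) + ε/4 * (4⁻¹:ℝ)^n := hkey n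
          _ ≤ ‖gs‖ + ε/4 * (4⁻¹:ℝ)^n := by linarith [hgs_ge n]
      have h8 : e (pF (n+1)) = e (pF n) + Q^(n+1) * e (G n) := by
        rw [hpF n, map_add, map_smul, smul_eq_mul]
      rw [h8, pow_succ Q n, pow_succ (4⁻¹:ℝ) n, hQ]
      rw [hQ] at ih h6
      nlinarith [ih, h6]
  -- d ≤ ‖gs‖
  have hd_gs : d ≤ ‖gs‖ := by
    have h0 : d ≤ a 0 (pF 0) := by
      apply le_ciInf
      intro w
      have h1 : pF 0 + Q^0 • (w : C(K, ℝ)) = (w : C(K, ℝ)) := by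
        have hz : pF 0 = 0 := rfl
        rw [hz, pow_zero, one_smul, zero_add]
      rw [h1]
      exact hd w w.2
    linarith [hgs_ge 0]
  -- conclusion
  refine ⟨x₀, fun n => ?_⟩
  by_contra hcon
  push_neg at hcon
  set cc : ℝ := d - ε with hcc
  have hbd : ∀ k, n ≤ k → |g k x₀| ≤ cc := fun k hk => le_of_lt (hcon k hk)
  have htail : e (∑' k, Q^(k+n+1) • G (k+n)) ≤ Q^n * cc := by
    have h5 : HasSum (fun k => e (Q^(k+n+1) • G (k+n))) (e (∑' k, Q^(k+n+1) • G (k+n))) :=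
      e.hasSum (htail_summable n).hasSum
    have h6 : ∀ k, e (Q^(k+n+1) • G (k+n)) ≤ Q^(k+n+1) * cc := by
      intro k
      rw [map_smul, smul_eq_mul]
      apply mul_le_mul_of_nonneg_left _ (le_of_lt (pow_pos hQ0 _))
      exact he_W cc n hbd (k+n) (Nat.le_add_left n k) (G (k+n)) (hGmem (k+n))
    have h7 : HasSum (fun k : ℕ => Q^(k+n+1) * cc) (Q^n * cc) := by
      have h9 := hh2.mul_left (Q^n * cc)
      have h10 : (fun k : ℕ => Q^n * cc * Q^(k+1)) = fun k : ℕ => Q^(k+n+1) * cc := by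
        funext k
        calc Q^n * cc * Q^(k+1) = cc * (Q^n * Q^(k+1)) := by ring
          _ = cc * Q^(n+(k+1)) := by rw [← pow_add]
          _ = cc * Q^(k+n+1) := by rw [show n+(k+1) = k+n+1 from by omega]
          _ = Q^(k+n+1) * cc := by ring
      rw [h10] at h9
      rwa [mul_one] at h9
    exact hasSum_le h6 h5 h7
  have hsplit : ‖gs‖ ≤ e (pF n) + Q^n * cc := by
    calc ‖gs‖ = e gs := he_gs.symm
      _ = e (pF n) + e (∑' k, Q^(k+n+1) • G (k+n)) := by rw [hdecomp n, map_add]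
      _ ≤ e (pF n) + Q^n * cc := by linarith [htail]
  have hQn : (0:ℝ) < Q^n := pow_pos hQ0 n
  have h4n : (0:ℝ) < (4⁻¹:ℝ)^n * (ε/2) := by positivity
  have hkey2 : Q^n * (‖gs‖ - ε/2 - cc) ≤ -((4⁻¹:ℝ)^n * (ε/2)) := by
    have h1 := hIN n
    set R := ‖gs‖
    set P := e (pF n)
    set T := Q ^ n
    set B := (4⁻¹:ℝ) ^ n
    clear_value cc R P T B
    nlinarith [h1, hsplit]
  have hneg : ‖gs‖ - ε/2 - cc < 0 := by
    by_contra hge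
    push_neg at hge
    nlinarith [mul_nonneg (le_of_lt hQn) hge]
  rw [hcc] at hneg
  set R := ‖gs‖
  clear_value R
  linarith

/-! ### oscillation sets of a real sequence -/

def oSet (u : ℕ → ℝ) (n : ℕ) : Set ℝ := {r : ℝ | ∃ i j : ℕ, n ≤ i ∧ n ≤ j ∧ r = |u i - u j|}

lemma zero_mem_oSet (u : ℕ → ℝ) (n : ℕ) : (0:ℝ) ∈ oSet u n :=
  ⟨n, n, le_rfl, le_rfl, by simp⟩

lemma oSet_nonempty (u : ℕ → ℝ) (n : ℕ) : (oSet u n).Nonempty := ⟨0, zero_mem_oSet u n⟩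

lemma oSet_le {u : ℕ → ℝ} {C : ℝ} (hC : ∀ k, |u k| ≤ C) {n : ℕ} {r : ℝ}
    (hr : r ∈ oSet u n) : r ≤ 2 * C := by
  obtain ⟨i, j, -, -, rfl⟩ := hr
  calc |u i - u j| ≤ |u i| + |u j| := abs_sub _ _
    _ ≤ 2 * C := by linarith [hC i, hC j]

lemma oSet_bddAbove {u : ℕ → ℝ} {C : ℝ} (hC : ∀ k, |u k| ≤ C) (n : ℕ) :
    BddAbove (oSet u n) := ⟨2 * C, fun _ hr => oSet_le hC hr⟩

lemma sSup_oSet_nonneg {u : ℕ → ℝ} {C : ℝ} (hC : ∀ k, |u k| ≤ C) (n : ℕ) :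
    0 ≤ sSup (oSet u n) := le_csSup (oSet_bddAbove hC n) (zero_mem_oSet u n)

lemma sSup_oSet_le {u : ℕ → ℝ} {C : ℝ} (hC : ∀ k, |u k| ≤ C) (n : ℕ) :
    sSup (oSet u n) ≤ 2 * C := csSup_le (oSet_nonempty u n) (fun _ hr => oSet_le hC hr)

lemma oSet_anti (u : ℕ → ℝ) {m n : ℕ} (h : m ≤ n) : oSet u n ⊆ oSet u m := by
  rintro r ⟨i, j, hi, hj, rfl⟩
  exact ⟨i, j, le_trans h hi, le_trans h hj, rfl⟩

lemma sSup_oSet_anti {u : ℕ → ℝ} {C : ℝ} (hC : ∀ k, |u k| ≤ C) :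
    Antitone (fun n => sSup (oSet u n)) := fun m n h =>
  csSup_le_csSup (oSet_bddAbove hC m) (oSet_nonempty u n) (oSet_anti u h)

lemma iInf_sSup_oSet_nonneg {u : ℕ → ℝ} {C : ℝ} (hC : ∀ k, |u k| ≤ C) :
    0 ≤ ⨅ n, sSup (oSet u n) :=
  Real.iInf_nonneg (fun n => sSup_oSet_nonneg hC n)

lemma iInf_sSup_oSet_le {u : ℕ → ℝ} {C : ℝ} (hC : ∀ k, |u k| ≤ C) :
    (⨅ n, sSup (oSet u n)) ≤ 2 * C := by
  refine le_trans (ciInf_le ⟨0, ?_⟩ 0) (sSup_oSet_le hC 0)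
  rintro r ⟨n, rfl⟩
  exact sSup_oSet_nonneg hC n

/-! ### Part (i) -/

lemma dual_abs_le {Z : Type*} [NormedAddCommGroup Z] [NormedSpace ℝ Z]
    (φ : StrongDual ℝ Z) (hφ : ‖φ‖ ≤ 1) (z : Z) : |φ z| ≤ ‖z‖ := by
  calc |φ z| = ‖φ z‖ := (Real.norm_eq_abs _).symm
    _ ≤ ‖φ‖ * ‖z‖ := φ.le_opNorm z
    _ ≤ 1 * ‖z‖ := mul_le_mul_of_nonneg_right hφ (norm_nonneg _)
    _ = ‖z‖ := one_mul _

lemma part_i (f : ℕ → C(K, ℝ)) (M : ℝ) (hM : ∀ n, ‖f n‖ ≤ M) :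
    deltaSeq f = ⨆ x : K, ⨅ n : ℕ,
      sSup {r : ℝ | ∃ i j : ℕ, n ≤ i ∧ n ≤ j ∧ r = |f i x - f j x|} := by
  classical
  have hM0 : 0 ≤ M := le_trans (norm_nonneg _) (hM 0)
  haveI hball : Nonempty (closedBall (0 : StrongDual ℝ C(K, ℝ)) 1) :=
    ⟨⟨0, mem_closedBall_self (by norm_num)⟩⟩
  have hnormφ : ∀ φ : (closedBall (0 : StrongDual ℝ C(K, ℝ)) 1), ‖(φ : StrongDual ℝ C(K, ℝ))‖ ≤ 1 :=
    fun φ => (mem_closedBall_zero_iff (E := StrongDual ℝ C(K, ℝ))).mp φ.2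
  have huφ : ∀ φ : (closedBall (0 : StrongDual ℝ C(K, ℝ)) 1), ∀ k,
      |(φ : StrongDual ℝ C(K, ℝ)) (f k)| ≤ M :=
    fun φ k => le_trans (dual_abs_le _ (hnormφ φ) (f k)) (hM k)
  rcases isEmpty_or_nonempty K with hK | hK
  · -- empty case
    rw [Real.iSup_of_isEmpty]
    have hzero : ∀ φ : (closedBall (0 : StrongDual ℝ C(K, ℝ)) 1), (⨅ n : ℕ,
        sSup {r : ℝ | ∃ i j : ℕ, n ≤ i ∧ n ≤ j ∧
          r = |(φ : StrongDual ℝ C(K, ℝ)) (f i) - (φ : StrongDual ℝ C(K, ℝ)) (f j)|}) = 0 := by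
      intro φ
      have hset : ∀ n : ℕ, {r : ℝ | ∃ i j : ℕ, n ≤ i ∧ n ≤ j ∧
          r = |(φ : StrongDual ℝ C(K, ℝ)) (f i) - (φ : StrongDual ℝ C(K, ℝ)) (f j)|} = {(0:ℝ)} := by
        intro n
        ext r
        simp only [mem_setOf_eq, mem_singleton_iff]
        constructor
        · rintro ⟨i, j, -, -, rfl⟩
          have hfij : f i = f j := ContinuousMap.ext fun x => (hK.elim x)
          rw [hfij]
          simp
        · rintro rfl
          exact ⟨n, n, le_rfl, le_rfl, by simp⟩
      simp only [hset, csSup_singleton, ciInf_const]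
    rw [show deltaSeq f = ⨆ φ : (closedBall (0 : StrongDual ℝ C(K, ℝ)) 1), (⨅ n : ℕ,
        sSup {r : ℝ | ∃ i j : ℕ, n ≤ i ∧ n ≤ j ∧
          r = |(φ : StrongDual ℝ C(K, ℝ)) (f i) - (φ : StrongDual ℝ C(K, ℝ)) (f j)|}) from rfl]
    simp only [hzero, ciSup_const]
  · -- nonempty case
    -- bounded families
    have hbddφ : BddAbove (range fun φ : (closedBall (0 : StrongDual ℝ C(K, ℝ)) 1) =>
        ⨅ n : ℕ, sSup {r : ℝ | ∃ i j : ℕ, n ≤ i ∧ n ≤ j ∧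
          r = |(φ : StrongDual ℝ C(K, ℝ)) (f i) - (φ : StrongDual ℝ C(K, ℝ)) (f j)|}) := by
      refine ⟨2 * M, ?_⟩
      rintro r ⟨φ, rfl⟩
      exact iInf_sSup_oSet_le (huφ φ)
    have hxk : ∀ (x : K) (k : ℕ), |f k x| ≤ M := by
      intro x k
      calc |f k x| = ‖f k x‖ := (Real.norm_eq_abs _).symm
        _ ≤ ‖f k‖ := (f k).norm_coe_le_norm x
        _ ≤ M := hM k
    have hbddx : BddAbove (range fun x : K =>
        ⨅ n : ℕ, sSup {r : ℝ | ∃ i j : ℕ, n ≤ i ∧ n ≤ j ∧ r = |f i x - f j x|}) := by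
      refine ⟨2 * M, ?_⟩
      rintro r ⟨x, rfl⟩
      exact iInf_sSup_oSet_le (hxk x)
    apply le_antisymm
    · -- hard direction
      apply ciSup_le
      intro φ
      set u : ℕ → ℝ := fun k => (φ : StrongDual ℝ C(K, ℝ)) (f k) with hu
      set c : ℝ := ⨅ n : ℕ, sSup (oSet u n) with hc
      show c ≤ _
      have hbelow : BddBelow (range fun n => sSup (oSet u n)) := by
        refine ⟨0, ?_⟩
        rintro r ⟨n, rfl⟩
        exact sSup_oSet_nonneg (huφ φ) n
      -- enough : ∀ η > 0, c - 2η ≤ RHS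
      by_contra hcon
      push_neg at hcon
      set s : ℝ := ⨆ x : K, ⨅ n : ℕ,
        sSup {r : ℝ | ∃ i j : ℕ, n ≤ i ∧ n ≤ j ∧ r = |f i x - f j x|} with hs
      set η : ℝ := (c - s) / 4 with hη
      have hη0 : 0 < η := by simp only [hη]; linarith
      -- choose i, j with large oscillation
      have hchoose : ∀ n : ℕ, ∃ i j : ℕ, n ≤ i ∧ n ≤ j ∧ c - η < |u i - u j| := by
        intro n
        have h1 : c - η < sSup (oSet u n) := by
          have : c ≤ sSup (oSet u n) := ciInf_le hbelow n
          linarith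
        obtain ⟨r, hr, hlt⟩ := exists_lt_of_lt_csSup (oSet_nonempty u n) h1
        obtain ⟨i, j, hi, hj, rfl⟩ := hr
        exact ⟨i, j, hi, hj, hlt⟩
      choose I J hI hJ hIJ using hchoose
      set gS : ℕ → C(K, ℝ) := fun n =>
        if 0 ≤ u (I n) - u (J n) then f (I n) - f (J n) else f (J n) - f (I n) with hgS
      have hφg : ∀ n, (φ : StrongDual ℝ C(K, ℝ)) (gS n) = |u (I n) - u (J n)| := by
        intro n
        by_cases h0 : 0 ≤ u (I n) - u (J n)
        · rw [hgS]; simp only [if_pos h0, map_sub]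
          rw [abs_of_nonneg h0]
        · push_neg at h0
          rw [hgS]; simp only [if_neg (not_le.mpr h0), map_sub]
          rw [abs_of_neg h0]; ring
      have hgnorm : ∀ n, ‖gS n‖ ≤ 2 * M := by
        intro n
        have : ∀ i j : ℕ, ‖f i - f j‖ ≤ 2 * M := fun i j => by
          calc ‖f i - f j‖ ≤ ‖f i‖ + ‖f j‖ := norm_sub_le _ _
            _ ≤ 2 * M := by linarith [hM i, hM j]
        simp only [hgS]
        split
        · exact this _ _
        · exact this _ _
      have hd : ∀ h ∈ simonsW gS 0, c - η ≤ ‖h‖ := by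
        rintro h ⟨lam, h1, -, h3, h4⟩
        have h5 : HasSum (fun k => (φ : StrongDual ℝ C(K, ℝ)) (lam k • gS k))
            ((φ : StrongDual ℝ C(K, ℝ)) h) := (φ : StrongDual ℝ C(K, ℝ)).hasSum h4
        have h6 : ∀ k, lam k * (c - η) ≤ (φ : StrongDual ℝ C(K, ℝ)) (lam k • gS k) := by
          intro k
          rw [map_smul, smul_eq_mul]
          apply mul_le_mul_of_nonneg_left _ (h1 k)
          rw [hφg k]
          exact le_of_lt (hIJ k)
        have h7 : HasSum (fun k => lam k * (c - η)) (1 * (c - η)) := h3.mul_right _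
        have h8 := hasSum_le h6 h7 h5
        have h9 : (φ : StrongDual ℝ C(K, ℝ)) h ≤ ‖h‖ :=
          le_trans (le_abs_self _) (dual_abs_le _ (hnormφ φ) h)
        linarith
      obtain ⟨x₀, hx₀⟩ := simons gS (2 * M) hgnorm (c - η) η hd hη0
      -- now RHS at x₀ is ≥ c - 2η
      have hxx : (⨅ n : ℕ, sSup (oSet (fun k => f k x₀) n)) ≤ s := by
        have := le_ciSup hbddx x₀
        exact this
      have hge : c - 2 * η ≤ ⨅ n : ℕ, sSup (oSet (fun k => f k x₀) n) := by
        apply le_ciInf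
        intro n
        obtain ⟨k, hk, hkval⟩ := hx₀ n
        have hmem : |gS k x₀| ∈ oSet (fun k => f k x₀) n := by
          rw [hgS]
          by_cases h0 : 0 ≤ u (I k) - u (J k)
          · simp only [if_pos h0]
            exact ⟨I k, J k, le_trans hk (hI k), le_trans hk (hJ k), by
              simp [ContinuousMap.sub_apply]⟩
          · simp only [if_neg h0]
            exact ⟨J k, I k, le_trans hk (hJ k), le_trans hk (hI k), by
              simp [ContinuousMap.sub_apply]⟩
        calc c - 2 * η = (c - η) - η := by ring
          _ ≤ |gS k x₀| := hkval
          _ ≤ sSup (oSet (fun k => f k x₀) n) := le_csSup (oSet_bddAbove (hxk x₀) n) hmem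
      simp only [hη] at hge
      linarith [le_trans hge hxx]
    · -- easy direction
      apply ciSup_le
      intro x
      have hmem : (ContinuousMap.evalCLM ℝ x : StrongDual ℝ C(K, ℝ)) ∈
          closedBall (0 : StrongDual ℝ C(K, ℝ)) 1 := by
        refine (mem_closedBall_zero_iff (E := StrongDual ℝ C(K, ℝ))).mpr ?_
        apply ContinuousLinearMap.opNorm_le_bound _ (by norm_num)
        intro h
        rw [one_mul]
        exact h.norm_coe_le_norm x
      have := le_ciSup hbddφ (⟨_, hmem⟩ : (closedBall (0 : StrongDual ℝ C(K, ℝ)) 1))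
      exact this

lemma deltaSeq_nonneg (f : ℕ → C(K, ℝ)) (M : ℝ) (hM : ∀ n, ‖f n‖ ≤ M) :
    0 ≤ deltaSeq f := by
  have hball : (0 : StrongDual ℝ C(K, ℝ)) ∈ closedBall (0 : StrongDual ℝ C(K, ℝ)) 1 :=
    mem_closedBall_self (by norm_num)
  have hb : BddAbove (range fun φ : (closedBall (0 : StrongDual ℝ C(K, ℝ)) 1) =>
      ⨅ n : ℕ, sSup {r : ℝ | ∃ i j : ℕ, n ≤ i ∧ n ≤ j ∧
        r = |(φ : StrongDual ℝ C(K, ℝ)) (f i) - (φ : StrongDual ℝ C(K, ℝ)) (f j)|}) := by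
    refine ⟨2 * M, ?_⟩
    rintro r ⟨φ, rfl⟩
    refine iInf_sSup_oSet_le (C := M) (fun k => ?_)
    have h1 : ‖(φ : StrongDual ℝ C(K, ℝ))‖ ≤ 1 := (mem_closedBall_zero_iff (E := StrongDual ℝ C(K, ℝ))).mp φ.2
    calc |(φ : StrongDual ℝ C(K, ℝ)) (f k)| = ‖(φ : StrongDual ℝ C(K, ℝ)) (f k)‖ :=
          (Real.norm_eq_abs _).symm
      _ ≤ ‖(φ : StrongDual ℝ C(K, ℝ))‖ * ‖f k‖ := ContinuousLinearMap.le_opNorm _ _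
      _ ≤ 1 * M := mul_le_mul h1 (hM k) (norm_nonneg _) (by norm_num)
      _ = M := one_mul M
  have h2 := le_ciSup hb (⟨0, hball⟩ : (closedBall (0 : StrongDual ℝ C(K, ℝ)) 1))
  refine le_trans ?_ h2
  apply le_ciInf
  intro n
  have : (0:ℝ) ∈ {r : ℝ | ∃ i j : ℕ, n ≤ i ∧ n ≤ j ∧
      r = |(0 : StrongDual ℝ C(K, ℝ)) (f i) - (0 : StrongDual ℝ C(K, ℝ)) (f j)|} :=
    ⟨n, n, le_rfl, le_rfl, by simp⟩
  apply le_csSup _ this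
  refine ⟨0, ?_⟩
  rintro r ⟨i, j, -, -, rfl⟩
  simp

lemma part_ii [T2Space K] [MeasurableSpace K] [BorelSpace K]
    (f : ℕ → C(K, ℝ)) (M : ℝ) (hM : ∀ n, ‖f n‖ ≤ M) :
    ∀ (μ : MeasureTheory.Measure K), MeasureTheory.IsFiniteMeasure μ → μ.Regular →
      ∀ ε : ℝ, 0 < ε → ∃ L : Set K, IsCompact L ∧ μ Lᶜ ≤ ENNReal.ofReal ε ∧
        (⨅ n : ℕ, sSup {r : ℝ | ∃ i j : ℕ, n ≤ i ∧ n ≤ j ∧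
          ∃ x ∈ L, r = |f i x - f j x|}) ≤ deltaSeq f := by
  classical
  intro μ hfin hreg ε hε
  haveI := hfin
  haveI := hreg
  have hM0 : 0 ≤ M := le_trans (norm_nonneg _) (hM 0)
  have hxk : ∀ (x : K) (k : ℕ), |f k x| ≤ M := by
    intro x k
    calc |f k x| = ‖f k x‖ := (Real.norm_eq_abs _).symm
      _ ≤ ‖f k‖ := (f k).norm_coe_le_norm x
      _ ≤ M := hM k
  -- the T functions and their pointwise infimum
  set T : ℕ → K → ℝ := fun n x => sSup (oSet (fun k => f k x) n) with hT
  set gfun : K → ℝ := fun x => ⨅ n, T n x with hgfun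
  -- measurability
  have hTmeas : ∀ n, Measurable (T n) := by
    intro n
    have heq : T n = fun x => ⨆ p : ℕ × ℕ,
        (if n ≤ p.1 ∧ n ≤ p.2 then |f p.1 x - f p.2 x| else 0) := by
      funext x
      have hrange : range (fun p : ℕ × ℕ =>
          (if n ≤ p.1 ∧ n ≤ p.2 then |f p.1 x - f p.2 x| else 0)) = oSet (fun k => f k x) n := by
        ext r
        constructor
        · rintro ⟨p, rfl⟩
          by_cases hp : n ≤ p.1 ∧ n ≤ p.2
          · simp only [if_pos hp]
            exact ⟨p.1, p.2, hp.1, hp.2, rfl⟩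
          · simp only [if_neg hp]
            exact zero_mem_oSet _ n
        · rintro ⟨i, j, hi, hj, rfl⟩
          exact ⟨(i, j), if_pos ⟨hi, hj⟩⟩
      rw [hT]
      show sSup _ = iSup _
      rw [iSup, hrange]
    rw [heq]
    apply Measurable.iSup
    intro p
    by_cases hp : n ≤ p.1 ∧ n ≤ p.2
    · simp only [if_pos hp]
      exact (((f p.1).continuous.measurable).sub ((f p.2).continuous.measurable)).abs
    · simp only [if_neg hp]
      exact measurable_const
  have hgmeas : Measurable gfun := Measurable.iInf hTmeas
  -- pointwise convergence T n x → gfun x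
  have htend : ∀ x : K, Tendsto (fun n => T n x) atTop (nhds (gfun x)) := by
    intro x
    apply tendsto_atTop_ciInf
    · exact sSup_oSet_anti (hxk x)
    · refine ⟨0, ?_⟩
      rintro r ⟨n, rfl⟩
      exact sSup_oSet_nonneg (hxk x) n
  -- Egoroff
  obtain ⟨t, htm, htμ, hunif⟩ := MeasureTheory.tendstoUniformlyOn_of_ae_tendsto'
    (fun n => (hTmeas n).stronglyMeasurable) hgmeas.stronglyMeasurable
    (MeasureTheory.ae_of_all μ htend) (show (0:ℝ) < ε/2 by linarith)
  -- inner regularity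
  obtain ⟨L, hLsub, hLcomp, hLlt⟩ := (htm.compl).exists_isCompact_lt_add
    (MeasureTheory.measure_ne_top μ _)
    (show ENNReal.ofReal (ε/2) ≠ 0 by
      simp [ENNReal.ofReal_eq_zero]; linarith)
  refine ⟨L, hLcomp, ?_, ?_⟩
  · -- measure bound
    have h1 : μ (tᶜ \ L) ≤ ENNReal.ofReal (ε/2) := by
      rw [MeasureTheory.measure_diff hLsub hLcomp.measurableSet.nullMeasurableSet
        (MeasureTheory.measure_ne_top μ L)]
      exact tsub_le_iff_left.mpr hLlt.le
    have h2 : Lᶜ ⊆ t ∪ (tᶜ \ L) := by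
      intro x hx
      by_cases hxt : x ∈ t
      · exact Or.inl hxt
      · exact Or.inr ⟨hxt, hx⟩
    calc μ Lᶜ ≤ μ (t ∪ (tᶜ \ L)) := MeasureTheory.measure_mono h2
      _ ≤ μ t + μ (tᶜ \ L) := MeasureTheory.measure_union_le _ _
      _ ≤ ENNReal.ofReal (ε/2) + ENNReal.ofReal (ε/2) := add_le_add htμ h1
      _ = ENNReal.ofReal ε := by
          rw [← ENNReal.ofReal_add (by linarith) (by linarith)]
          norm_num
  · -- the quantitative bound
    have hds : deltaSeq f = ⨆ x : K, ⨅ n : ℕ,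
        sSup {r : ℝ | ∃ i j : ℕ, n ≤ i ∧ n ≤ j ∧ r = |f i x - f j x|} := part_i f M hM
    rcases isEmpty_or_nonempty K with hK | hK
    · have hL : L = ∅ := eq_empty_of_isEmpty L
      have hset : ∀ n : ℕ, {r : ℝ | ∃ i j : ℕ, n ≤ i ∧ n ≤ j ∧
          ∃ x ∈ L, r = |f i x - f j x|} = ∅ := by
        intro n
        rw [hL]
        simp
      simp only [hset, Real.sSup_empty, ciInf_const]
      exact deltaSeq_nonneg f M hM
    · rcases L.eq_empty_or_nonempty with hL | hL
      · have hset : ∀ n : ℕ, {r : ℝ | ∃ i j : ℕ, n ≤ i ∧ n ≤ j ∧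
            ∃ x ∈ L, r = |f i x - f j x|} = ∅ := by
          intro n
          rw [hL]
          simp
        simp only [hset, Real.sSup_empty, ciInf_const]
        exact deltaSeq_nonneg f M hM
      · -- L nonempty
        obtain ⟨x₁, hx₁⟩ := hL
        have hbddx : BddAbove (range fun x : K =>
            ⨅ n : ℕ, sSup {r : ℝ | ∃ i j : ℕ, n ≤ i ∧ n ≤ j ∧ r = |f i x - f j x|}) := by
          refine ⟨2 * M, ?_⟩
          rintro r ⟨x, rfl⟩
          exact iInf_sSup_oSet_le (hxk x)
        have hgle : ∀ x : K, gfun x ≤ deltaSeq f := by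
          intro x
          rw [hds]
          exact le_ciSup hbddx x
        -- lower bound for the infimum terms
        have hbelow : BddBelow (range fun n => sSup {r : ℝ | ∃ i j : ℕ, n ≤ i ∧ n ≤ j ∧
            ∃ x ∈ L, r = |f i x - f j x|}) := by
          refine ⟨0, ?_⟩
          rintro r ⟨n, rfl⟩
          apply le_csSup
          · refine ⟨2 * M, ?_⟩
            rintro r' ⟨i, j, -, -, x, -, rfl⟩
            calc |f i x - f j x| ≤ |f i x| + |f j x| := abs_sub _ _
              _ ≤ 2 * M := by linarith [hxk x i, hxk x j]
          · exact ⟨n, n, le_rfl, le_rfl, x₁, hx₁, by simp⟩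
        -- ∀ η > 0, inf ≤ s + η
        have hkey : ∀ η : ℝ, 0 < η → (⨅ n : ℕ, sSup {r : ℝ | ∃ i j : ℕ, n ≤ i ∧ n ≤ j ∧
            ∃ x ∈ L, r = |f i x - f j x|}) ≤ deltaSeq f + η := by
          intro η hη
          have hev := (Metric.tendstoUniformlyOn_iff.mp hunif) η hη
          obtain ⟨n, hn⟩ := hev.exists
          refine le_trans (ciInf_le hbelow n) ?_
          refine csSup_le ⟨0, ⟨n, n, le_rfl, le_rfl, x₁, hx₁, by simp⟩⟩ ?_
          rintro r ⟨i, j, hi, hj, x, hxL, rfl⟩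
          have hxt : x ∈ tᶜ := hLsub hxL
          have hdist := hn x hxt
          rw [Real.dist_eq] at hdist
          have hTle : T n x ≤ gfun x + η := by
            have := abs_lt.mp hdist
            linarith [this.2]
          have hrT : |f i x - f j x| ≤ T n x := by
            apply le_csSup (oSet_bddAbove (hxk x) n)
            exact ⟨i, j, hi, hj, rfl⟩
          calc |f i x - f j x| ≤ T n x := hrT
            _ ≤ gfun x + η := hTle
            _ ≤ deltaSeq f + η := by linarith [hgle x]
        by_contra hcon
        push_neg at hcon
        have := hkey (((⨅ n : ℕ, sSup {r : ℝ | ∃ i j : ℕ, n ≤ i ∧ n ≤ j ∧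
            ∃ x ∈ L, r = |f i x - f j x|}) - deltaSeq f) / 2) (by linarith)
        linarith


end Stmt18Aux
end Stmt18AuxSect

/-- For a bounded sequence `(f_n)` in `C(K)`:
(i) `δ(f_n) = sup_{x∈K} inf_n sup_{i,j≥n} |f_i(x) − f_j(x)|`, and
(ii) a quantitative Egoroff theorem. -/
theorem statement18 {K : Type*} [TopologicalSpace K] [CompactSpace K] [T2Space K]
    [MeasurableSpace K] [BorelSpace K]
    (f : ℕ → C(K, ℝ)) (hf : ∃ M : ℝ, ∀ n, ‖f n‖ ≤ M) :
    (deltaSeq f = ⨆ x : K, ⨅ n : ℕ,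
      sSup {r : ℝ | ∃ i j : ℕ, n ≤ i ∧ n ≤ j ∧ r = |f i x - f j x|}) ∧
    (∀ (μ : MeasureTheory.Measure K), MeasureTheory.IsFiniteMeasure μ → μ.Regular →
      ∀ ε : ℝ, 0 < ε → ∃ L : Set K, IsCompact L ∧ μ Lᶜ ≤ ENNReal.ofReal ε ∧
        (⨅ n : ℕ, sSup {r : ℝ | ∃ i j : ℕ, n ≤ i ∧ n ≤ j ∧
          ∃ x ∈ L, r = |f i x - f j x|}) ≤ deltaSeq f) := by
  obtain ⟨M, hM⟩ := hf
  exact ⟨Stmt18Aux.part_i f M hM, Stmt18Aux.part_ii f M hM⟩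

end
end
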